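/- Let ≿ be the Choquet expected utility preference on 𝓕 represented by f ↦ ∫ u(f) dπ (Choquet integral), where u : X → ℝ is nonconstant affine with 0 in the interior of u(X) and π is a capacity on (S, Σ). Then a nonempty, convex, weak*-compact set P ⊆ Δ belongs to 𝒫* if and only if for every finite chain ∅ = A₀ ⊂ A₁ ⊂ ⋯ ⊂ A_n = S in Σ, the set P ∩ {p ∈ Δ : p(A_i) ≤ π(A_i) for all 1 ≤ i ≤ n} is nonempty; and a nonempty, convex, weak*-compact set Q ⊆ Δ belongs to 𝒬* if and only if for every finite chain ∅ = A₀ ⊂ A₁ ⊂ ⋯ ⊂ A_n = S in Σ, the set Q ∩ {q ∈ Δ : q(A_i) ≥ π(A_i) for all 1 ≤ i ≤ n} is nonempty. -/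

import Mathlib

open scoped Pointwise
open MeasureTheory

namespace Paper

variable {S V : Type*}

/-- An algebra of subsets of `S` (the events `Σ`). -/
structure IsSetAlg (𝓐 : Set (Set S)) : Prop where
  empty_mem : ∅ ∈ 𝓐
  compl_mem : ∀ A ∈ 𝓐, Aᶜ ∈ 𝓐
  union_mem : ∀ A ∈ 𝓐, ∀ B ∈ 𝓐, A ∪ B ∈ 𝓐

/-- `B₀(Σ)`: real-valued `Σ`-measurable simple functions. -/
def IsSimpleFn (𝓐 : Set (Set S)) (φ : S → ℝ) : Prop :=
  (Set.range φ).Finite ∧ ∀ t : ℝ, φ ⁻¹' {t} ∈ 𝓐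

open Classical in
/-- The integral of a simple function with respect to a finitely additive set function. -/
noncomputable def fint (p : Set S → ℝ) (φ : S → ℝ) : ℝ :=
  if h : (Set.range φ).Finite then ∑ t ∈ h.toFinset, t * p (φ ⁻¹' {t}) else 0

/-- `Δ`: the finitely additive probabilities on `Σ` (canonically extended by `0` off `Σ`). -/
def Δset (𝓐 : Set (Set S)) : Set (Set S → ℝ) :=
  {p | p Set.univ = 1 ∧ (∀ A ∈ 𝓐, 0 ≤ p A) ∧
    (∀ A ∈ 𝓐, ∀ B ∈ 𝓐, Disjoint A B → p (A ∪ B) = p A + p B) ∧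
    ∀ A : Set S, A ∉ 𝓐 → p A = 0}

/-- The weak* topology `σ(Δ, B₀(Σ))`, i.e. the topology induced by the evaluation maps
`p ↦ ∫ φ dp`, `φ ∈ B₀(Σ)`. -/
noncomputable def weakStar (𝓐 : Set (Set S)) : TopologicalSpace (Set S → ℝ) :=
  TopologicalSpace.induced
    (fun p => fun φ : {φ : S → ℝ // IsSimpleFn 𝓐 φ} => fint p φ.1)
    Pi.topologicalSpace

/-- `𝒞`: the weak*-lower semicontinuous convex functions `c : Δ → (-∞, ∞]`. -/
def Cscr (𝓐 : Set (Set S)) : Set ((Set S → ℝ) → EReal) :=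
  {c | (∀ p ∈ Δset 𝓐, ⊥ < c p) ∧
    (@LowerSemicontinuousOn (Set S → ℝ) EReal (weakStar 𝓐) _ c (Δset 𝓐)) ∧
    ∀ p ∈ Δset 𝓐, ∀ q ∈ Δset 𝓐, ∀ a b : ℝ, 0 ≤ a → 0 ≤ b → a + b = 1 →
      c (a • p + b • q) ≤ (a : EReal) * c p + (b : EReal) * c q}

/-- A subset `C ⊆ 𝒞` is grounded if `sup_{c ∈ C} min_{p ∈ Δ} c p = 0`. -/
def Grounded (𝓐 : Set (Set S)) (C : Set ((Set S → ℝ) → EReal)) : Prop :=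
  (⨆ c ∈ C, ⨅ p ∈ Δset 𝓐, c p) = 0

/-- `min_{p ∈ Δ} (∫ φ dp + c p)`. -/
noncomputable def minVal (𝓐 : Set (Set S)) (c : (Set S → ℝ) → EReal) (φ : S → ℝ) : EReal :=
  ⨅ p ∈ Δset 𝓐, ((fint p φ : EReal) + c p)

/-- `max_{q ∈ Δ} (∫ φ dq - b q)`. -/
noncomputable def maxVal (𝓐 : Set (Set S)) (b : (Set S → ℝ) → EReal) (φ : S → ℝ) : EReal :=
  ⨆ q ∈ Δset 𝓐, ((fint q φ : EReal) - b q)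

/-- `max_{c ∈ C} min_{p ∈ Δ} (∫ φ dp + c p)`. -/
noncomputable def maxminVal (𝓐 : Set (Set S)) (C : Set ((Set S → ℝ) → EReal))
    (φ : S → ℝ) : EReal :=
  ⨆ c ∈ C, minVal 𝓐 c φ

/-- `min_{b ∈ B} max_{q ∈ Δ} (∫ φ dq - b q)`. -/
noncomputable def minmaxVal (𝓐 : Set (Set S)) (B : Set ((Set S → ℝ) → EReal))
    (φ : S → ℝ) : EReal :=
  ⨅ b ∈ B, maxVal 𝓐 b φ

/-- `min_{p ∈ P} ∫ φ dp`. -/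
noncomputable def minPVal (P : Set (Set S → ℝ)) (φ : S → ℝ) : EReal :=
  ⨅ p ∈ P, (fint p φ : EReal)

/-- `max_{q ∈ Q} ∫ φ dq`. -/
noncomputable def maxQVal (Q : Set (Set S → ℝ)) (φ : S → ℝ) : EReal :=
  ⨆ q ∈ Q, (fint q φ : EReal)

/-- `max_{P ∈ Pfam} min_{p ∈ P} ∫ φ dp`. -/
noncomputable def maxminPVal (Pfam : Set (Set (Set S → ℝ))) (φ : S → ℝ) : EReal :=
  ⨆ P ∈ Pfam, minPVal P φ

/-- `min_{Q ∈ Qfam} max_{q ∈ Q} ∫ φ dq`. -/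
noncomputable def minmaxQVal (Qfam : Set (Set (Set S → ℝ))) (φ : S → ℝ) : EReal :=
  ⨅ Q ∈ Qfam, maxQVal Q φ

open Classical in
/-- The convex-analytic indicator `δ_P` of a set `P`. -/
noncomputable def ind (P : Set (Set S → ℝ)) : (Set S → ℝ) → EReal :=
  fun p => if p ∈ P then (0 : EReal) else ⊤

variable [AddCommGroup V] [Module ℝ V]

/-- `𝓕`: the simple acts, i.e. `Σ`-measurable maps `f : S → X` with finitely many values. -/
def Acts (𝓐 : Set (Set S)) (X : Set V) : Set (S → V) :=
  {f | (∀ s, f s ∈ X) ∧ (Set.range f).Finite ∧ ∀ v : V, f ⁻¹' {v} ∈ 𝓐}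

/-- The constant act with value `x`. -/
def constAct (x : V) : S → V := fun _ : S => x

/-- The mixture `α f + (1 - α) g` of two acts, defined statewise. -/
def mix (α : ℝ) (f g : S → V) : S → V := fun s => α • f s + (1 - α) • g s

/-- The statewise utility `u ∘ f` of an act. -/
def uAct (u : V → ℝ) (f : S → V) : S → ℝ := fun s => u (f s)

/-- `u : X → ℝ` is nonconstant and affine on `X`. -/
def IsNonconstAffine (X : Set V) (u : V → ℝ) : Prop :=
  (∀ x ∈ X, ∀ y ∈ X, ∀ t ∈ Set.Icc (0 : ℝ) 1,
      u (t • x + (1 - t) • y) = t * u x + (1 - t) * u y) ∧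
  ∃ x ∈ X, ∃ y ∈ X, u x ≠ u y

/-- A niveloidal preference: Axioms A1 (weak order), A2 (monotonicity), A3 (Archimedean)
and A4 (weak C-independence). -/
structure NiveloidalPref (𝓐 : Set (Set S)) (X : Set V)
    (R : (S → V) → (S → V) → Prop) : Prop where
  nontrivial : ∃ f ∈ Acts 𝓐 X, ∃ g ∈ Acts 𝓐 X, R f g ∧ ¬ R g f
  complete : ∀ f ∈ Acts 𝓐 X, ∀ g ∈ Acts 𝓐 X, R f g ∨ R g f
  transitive : ∀ f ∈ Acts 𝓐 X, ∀ g ∈ Acts 𝓐 X, ∀ h ∈ Acts 𝓐 X, R f g → R g h → R f h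
  monotone : ∀ f ∈ Acts 𝓐 X, ∀ g ∈ Acts 𝓐 X,
    (∀ s : S, R (constAct (f s)) (constAct (g s))) → R f g
  archimedean : ∀ f ∈ Acts 𝓐 X, ∀ g ∈ Acts 𝓐 X, ∀ h ∈ Acts 𝓐 X,
    (R f g ∧ ¬ R g f) → (R g h ∧ ¬ R h g) →
    ∃ α ∈ Set.Ioo (0 : ℝ) 1, ∃ β ∈ Set.Ioo (0 : ℝ) 1,
      (R (mix α f h) g ∧ ¬ R g (mix α f h)) ∧
      (R g (mix β f h) ∧ ¬ R (mix β f h) g)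
  weakCIndep : ∀ f ∈ Acts 𝓐 X, ∀ g ∈ Acts 𝓐 X, ∀ x ∈ X, ∀ y ∈ X,
    ∀ α ∈ Set.Ioo (0 : ℝ) 1,
    R (mix α f (constAct x)) (mix α g (constAct x)) →
    R (mix α f (constAct y)) (mix α g (constAct y))

/-- An invariant biseparable preference: Axioms A1 (weak order), A2 (monotonicity),
A3 (Archimedean) and A7 (C-independence). -/
structure IBPref (𝓐 : Set (Set S)) (X : Set V)
    (R : (S → V) → (S → V) → Prop) : Prop where
  nontrivial : ∃ f ∈ Acts 𝓐 X, ∃ g ∈ Acts 𝓐 X, R f g ∧ ¬ R g f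
  complete : ∀ f ∈ Acts 𝓐 X, ∀ g ∈ Acts 𝓐 X, R f g ∨ R g f
  transitive : ∀ f ∈ Acts 𝓐 X, ∀ g ∈ Acts 𝓐 X, ∀ h ∈ Acts 𝓐 X, R f g → R g h → R f h
  monotone : ∀ f ∈ Acts 𝓐 X, ∀ g ∈ Acts 𝓐 X,
    (∀ s : S, R (constAct (f s)) (constAct (g s))) → R f g
  archimedean : ∀ f ∈ Acts 𝓐 X, ∀ g ∈ Acts 𝓐 X, ∀ h ∈ Acts 𝓐 X,
    (R f g ∧ ¬ R g f) → (R g h ∧ ¬ R h g) →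
    ∃ α ∈ Set.Ioo (0 : ℝ) 1, ∃ β ∈ Set.Ioo (0 : ℝ) 1,
      (R (mix α f h) g ∧ ¬ R g (mix α f h)) ∧
      (R g (mix β f h) ∧ ¬ R (mix β f h) g)
  cIndep : ∀ f ∈ Acts 𝓐 X, ∀ g ∈ Acts 𝓐 X, ∀ x ∈ X, ∀ α ∈ Set.Ioo (0 : ℝ) 1,
    (R f g ↔ R (mix α f (constAct x)) (mix α g (constAct x)))

/-- Axiom A5 (uncertainty aversion). -/
def UncertaintyAverse (𝓐 : Set (Set S)) (X : Set V)
    (R : (S → V) → (S → V) → Prop) : Prop :=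
  ∀ f ∈ Acts 𝓐 X, ∀ g ∈ Acts 𝓐 X, ∀ α ∈ Set.Ioo (0 : ℝ) 1,
    R f g → R g f → R (mix α f g) f

/-- `xf` assigns to every act a certainty equivalent. -/
def IsCE (𝓐 : Set (Set S)) (X : Set V) (R : (S → V) → (S → V) → Prop)
    (xf : (S → V) → V) : Prop :=
  ∀ f ∈ Acts 𝓐 X, xf f ∈ X ∧ R f (constAct (xf f)) ∧ R (constAct (xf f)) f

/-- `C*`: the maximal candidate set of penalty functions. -/
def CstarOf (𝓐 : Set (Set S)) (X : Set V) (u : V → ℝ) (xf : (S → V) → V) :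
    Set ((Set S → ℝ) → EReal) :=
  {c | c ∈ Cscr 𝓐 ∧ ∀ f ∈ Acts 𝓐 X, minVal 𝓐 c (uAct u f) ≤ (u (xf f) : EReal)}

/-- `B*`: the maximal candidate set of reward functions. -/
def BstarOf (𝓐 : Set (Set S)) (X : Set V) (u : V → ℝ) (xf : (S → V) → V) :
    Set ((Set S → ℝ) → EReal) :=
  {b | b ∈ Cscr 𝓐 ∧ ∀ f ∈ Acts 𝓐 X, (u (xf f) : EReal) ≤ maxVal 𝓐 b (uAct u f)}

/-- `Pfam*`: the maximal family of prior sets (maxmin form). -/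
def PstarOf (𝓐 : Set (Set S)) (X : Set V) (u : V → ℝ) (xf : (S → V) → V) :
    Set (Set (Set S → ℝ)) :=
  {P | P ⊆ Δset 𝓐 ∧ P.Nonempty ∧ Convex ℝ P ∧ (@IsCompact _ (weakStar 𝓐) P) ∧
    ∀ f ∈ Acts 𝓐 X, minPVal P (uAct u f) ≤ (u (xf f) : EReal)}

/-- `Qfam*`: the maximal family of prior sets (minmax form). -/
def QstarOf (𝓐 : Set (Set S)) (X : Set V) (u : V → ℝ) (xf : (S → V) → V) :
    Set (Set (Set S → ℝ)) :=
  {Q | Q ⊆ Δset 𝓐 ∧ Q.Nonempty ∧ Convex ℝ Q ∧ (@IsCompact _ (weakStar 𝓐) Q) ∧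
    ∀ f ∈ Acts 𝓐 X, (u (xf f) : EReal) ≤ maxQVal Q (uAct u f)}

/-- `C` yields the maxmin representation of `R` with utility `u`. -/
def MaxminRep (𝓐 : Set (Set S)) (X : Set V) (R : (S → V) → (S → V) → Prop)
    (u : V → ℝ) (C : Set ((Set S → ℝ) → EReal)) : Prop :=
  ∀ f ∈ Acts 𝓐 X, ∀ g ∈ Acts 𝓐 X,
    (R f g ↔ maxminVal 𝓐 C (uAct u g) ≤ maxminVal 𝓐 C (uAct u f))

/-- All indicated maxima over `C` and minima over `Δ` are attained. -/
def MaxminAttained (𝓐 : Set (Set S)) (X : Set V) (u : V → ℝ)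
    (C : Set ((Set S → ℝ) → EReal)) : Prop :=
  ∀ f ∈ Acts 𝓐 X,
    (∀ c ∈ C, ∃ p ∈ Δset 𝓐,
      minVal 𝓐 c (uAct u f) = (fint p (uAct u f) : EReal) + c p) ∧
    ∃ c ∈ C, maxminVal 𝓐 C (uAct u f) = minVal 𝓐 c (uAct u f)

/-- `B` yields the minmax representation of `R` with utility `u`. -/
def MinmaxRep (𝓐 : Set (Set S)) (X : Set V) (R : (S → V) → (S → V) → Prop)
    (u : V → ℝ) (B : Set ((Set S → ℝ) → EReal)) : Prop :=
  ∀ f ∈ Acts 𝓐 X, ∀ g ∈ Acts 𝓐 X,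
    (R f g ↔ minmaxVal 𝓐 B (uAct u g) ≤ minmaxVal 𝓐 B (uAct u f))

/-- All indicated minima over `B` and maxima over `Δ` are attained. -/
def MinmaxAttained (𝓐 : Set (Set S)) (X : Set V) (u : V → ℝ)
    (B : Set ((Set S → ℝ) → EReal)) : Prop :=
  ∀ f ∈ Acts 𝓐 X,
    (∀ b ∈ B, ∃ q ∈ Δset 𝓐,
      maxVal 𝓐 b (uAct u f) = (fint q (uAct u f) : EReal) - b q) ∧
    ∃ b ∈ B, minmaxVal 𝓐 B (uAct u f) = maxVal 𝓐 b (uAct u f)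

/-- A family of nonempty, convex, weak*-compact subsets of `Δ`. -/
def IsPriorFamily (𝓐 : Set (Set S)) (Pfam : Set (Set (Set S → ℝ))) : Prop :=
  Pfam.Nonempty ∧ ∀ P ∈ Pfam,
    P ⊆ Δset 𝓐 ∧ P.Nonempty ∧ Convex ℝ P ∧ (@IsCompact _ (weakStar 𝓐) P)

/-- `Pfam` yields the maxmin representation of `R` with utility `u`. -/
def PRep (𝓐 : Set (Set S)) (X : Set V) (R : (S → V) → (S → V) → Prop)
    (u : V → ℝ) (Pfam : Set (Set (Set S → ℝ))) : Prop :=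
  ∀ f ∈ Acts 𝓐 X, ∀ g ∈ Acts 𝓐 X,
    (R f g ↔ maxminPVal Pfam (uAct u g) ≤ maxminPVal Pfam (uAct u f))

/-- All indicated maxima over `Pfam` and minima over `P` are attained. -/
def PAttained (𝓐 : Set (Set S)) (X : Set V) (u : V → ℝ)
    (Pfam : Set (Set (Set S → ℝ))) : Prop :=
  ∀ f ∈ Acts 𝓐 X,
    (∀ P ∈ Pfam, ∃ p ∈ P, minPVal P (uAct u f) = (fint p (uAct u f) : EReal)) ∧
    ∃ P ∈ Pfam, maxminPVal Pfam (uAct u f) = minPVal P (uAct u f)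

/-- `Qfam` yields the minmax representation of `R` with utility `u`. -/
def QRep (𝓐 : Set (Set S)) (X : Set V) (R : (S → V) → (S → V) → Prop)
    (u : V → ℝ) (Qfam : Set (Set (Set S → ℝ))) : Prop :=
  ∀ f ∈ Acts 𝓐 X, ∀ g ∈ Acts 𝓐 X,
    (R f g ↔ minmaxQVal Qfam (uAct u g) ≤ minmaxQVal Qfam (uAct u f))

/-- All indicated minima over `Qfam` and maxima over `Q` are attained. -/
def QAttained (𝓐 : Set (Set S)) (X : Set V) (u : V → ℝ)
    (Qfam : Set (Set (Set S → ℝ))) : Prop :=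
  ∀ f ∈ Acts 𝓐 X,
    (∀ Q ∈ Qfam, ∃ q ∈ Q, maxQVal Q (uAct u f) = (fint q (uAct u f) : EReal)) ∧
    ∃ Q ∈ Qfam, minmaxQVal Qfam (uAct u f) = maxQVal Q (uAct u f)

/-- `c₁ ≈_u c₂`: `c₁` and `c₂` induce the same variational functional on `B₀(Σ, u(X))`. -/
def ApproxEq (𝓐 : Set (Set S)) (X : Set V) (u : V → ℝ)
    (c₁ c₂ : (Set S → ℝ) → EReal) : Prop :=
  ∀ φ : S → ℝ, IsSimpleFn 𝓐 φ → (∀ s, φ s ∈ u '' X) →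
    minVal 𝓐 c₁ φ = minVal 𝓐 c₂ φ

/-- `R₁` is more ambiguity averse than `R₂`. -/
def MoreAmbiguityAverse (𝓐 : Set (Set S)) (X : Set V)
    (R₁ R₂ : (S → V) → (S → V) → Prop) : Prop :=
  ∀ f ∈ Acts 𝓐 X, ∀ x ∈ X, R₂ (constAct x) f → R₁ (constAct x) f

/-- `u₁` and `u₂` are positive affine transformations of each other on `X`. -/
def CardEquiv (X : Set V) (u₁ u₂ : V → ℝ) : Prop :=
  ∃ a b : ℝ, 0 < a ∧ ∀ x ∈ X, u₂ x = a * u₁ x + b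

/-- A capacity on `(S, Σ)`. -/
def IsCapacity (𝓐 : Set (Set S)) (π : Set S → ℝ) : Prop :=
  π ∅ = 0 ∧ π Set.univ = 1 ∧ ∀ A ∈ 𝓐, ∀ B ∈ 𝓐, A ⊆ B → π A ≤ π B

/-- The Choquet integral of a (simple) function against a capacity. -/
noncomputable def choquet (π : Set S → ℝ) (φ : S → ℝ) : ℝ :=
  (∫ t in Set.Ioi (0 : ℝ), π {s | t ≤ φ s}) +
    ∫ t in Set.Iio (0 : ℝ), (π {s | t ≤ φ s} - 1)

section Aux
variable {S : Type*} {𝓐 : Set (Set S)}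

lemma IsSetAlg.univ_mem (hA : IsSetAlg 𝓐) : Set.univ ∈ 𝓐 := by
  simpa using hA.compl_mem ∅ hA.empty_mem

lemma IsSetAlg.inter_mem (hA : IsSetAlg 𝓐) {A B : Set S} (ha : A ∈ 𝓐) (hb : B ∈ 𝓐) :
    A ∩ B ∈ 𝓐 := by
  have := hA.compl_mem _ (hA.union_mem _ (hA.compl_mem _ ha) _ (hA.compl_mem _ hb))
  simpa [Set.compl_union] using this

lemma IsSetAlg.diff_mem (hA : IsSetAlg 𝓐) {A B : Set S} (ha : A ∈ 𝓐) (hb : B ∈ 𝓐) :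
    A \ B ∈ 𝓐 := by
  simpa [Set.diff_eq] using hA.inter_mem ha (hA.compl_mem _ hb)

lemma IsSetAlg.biUnion_mem {ι : Type*} (hA : IsSetAlg 𝓐) (F : Finset ι) (B : ι → Set S)
    (hB : ∀ k ∈ F, B k ∈ 𝓐) : (⋃ k ∈ F, B k) ∈ 𝓐 := by
  classical
  induction F using Finset.induction with
  | empty => simpa using hA.empty_mem
  | @insert a F' hx ih =>
    rw [Finset.set_biUnion_insert]
    exact hA.union_mem _ (hB a (Finset.mem_insert_self a F'))
      _ (ih fun k hk => hB k (Finset.mem_insert_of_mem hk))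

lemma Δset.empty_eq_zero {p : Set S → ℝ} (hA : IsSetAlg 𝓐) (hp : p ∈ Δset 𝓐) : p ∅ = 0 := by
  obtain ⟨-, -, hadd, -⟩ := hp
  have := hadd ∅ hA.empty_mem ∅ hA.empty_mem (by simp)
  simp only [Set.union_empty] at this
  linarith

lemma Δset.le_one {p : Set S → ℝ} (hA : IsSetAlg 𝓐) (hp : p ∈ Δset 𝓐) {A : Set S}
    (ha : A ∈ 𝓐) : p A ≤ 1 := by
  obtain ⟨huniv, hpos, hadd, -⟩ := hp
  have h1 := hadd A ha Aᶜ (hA.compl_mem _ ha) disjoint_compl_right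
  rw [Set.union_compl_self, huniv] at h1
  have := hpos Aᶜ (hA.compl_mem _ ha)
  linarith

lemma Δset.diff_eq {p : Set S → ℝ} (hA : IsSetAlg 𝓐) (hp : p ∈ Δset 𝓐) {A B : Set S}
    (ha : A ∈ 𝓐) (hb : B ∈ 𝓐) (hsub : A ⊆ B) : p (B \ A) = p B - p A := by
  obtain ⟨-, -, hadd, -⟩ := hp
  have h1 := hadd A ha (B \ A) (hA.diff_mem hb ha) Set.disjoint_sdiff_right
  rw [Set.union_diff_cancel hsub] at h1
  linarith

lemma capacity_nonneg {π : Set S → ℝ} (hA : IsSetAlg 𝓐) (hπ : IsCapacity 𝓐 π) {A : Set S}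
    (ha : A ∈ 𝓐) : 0 ≤ π A := by
  have := hπ.2.2 ∅ hA.empty_mem A ha (Set.empty_subset A)
  rw [hπ.1] at this; exact this

lemma capacity_le_one {π : Set S → ℝ} (hA : IsSetAlg 𝓐) (hπ : IsCapacity 𝓐 π) {A : Set S}
    (ha : A ∈ 𝓐) : π A ≤ 1 := by
  have := hπ.2.2 A ha Set.univ hA.univ_mem (Set.subset_univ A)
  rw [hπ.2.1] at this; exact this

/-- Evaluate `fint` via any superset of the range. -/
lemma fint_eq_sum_of_subset {p : Set S → ℝ} {ψ : S → ℝ} (hfin : (Set.range ψ).Finite)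
    (hp0 : p ∅ = 0) (F : Finset ℝ) (hsub : hfin.toFinset ⊆ F) :
    fint p ψ = ∑ t ∈ F, t * p (ψ ⁻¹' {t}) := by
  classical
  rw [fint, dif_pos hfin]
  refine Finset.sum_subset hsub ?_
  intro t _ ht
  have : ψ ⁻¹' {t} = ∅ := by
    ext s; simp only [Set.mem_preimage, Set.mem_singleton_iff, Set.mem_empty_iff_false,
      iff_false]
    intro h
    exact ht (by simpa [Set.Finite.mem_toFinset] using ⟨s, h⟩)
  rw [this, hp0, mul_zero]

open Classical in
/-- The indicator of a set as a real function. -/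
noncomputable def indR (A : Set S) : S → ℝ := fun s => if s ∈ A then 1 else 0

lemma indR_isSimple (hA : IsSetAlg 𝓐) {A : Set S} (ha : A ∈ 𝓐) : IsSimpleFn 𝓐 (indR A) := by
  constructor
  · refine (Set.Finite.insert (0:ℝ) (Set.finite_singleton 1)).subset ?_
    rintro - ⟨s, rfl⟩
    by_cases h : s ∈ A <;> simp [indR, h]
  · intro t
    rcases eq_or_ne t 1 with rfl | h1
    · have : indR A ⁻¹' {(1:ℝ)} = A := by
        ext s; by_cases h : s ∈ A <;> simp [indR, h]
      rw [this]; exact ha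
    rcases eq_or_ne t 0 with rfl | h0
    · have : indR A ⁻¹' {(0:ℝ)} = Aᶜ := by
        ext s; by_cases h : s ∈ A <;> simp [indR, h]
      rw [this]; exact hA.compl_mem _ ha
    · have : indR A ⁻¹' {t} = ∅ := by
        ext s; by_cases h : s ∈ A <;> simp [indR, h, Ne.symm h1, Ne.symm h0]
      rw [this]; exact hA.empty_mem

lemma fint_indR (hA : IsSetAlg 𝓐) {p : Set S → ℝ} (hp : p ∈ Δset 𝓐) {A : Set S}
    (ha : A ∈ 𝓐) : fint p (indR A) = p A := by
  classical
  have hfin : (Set.range (indR A)).Finite := (indR_isSimple hA ha).1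
  rw [fint_eq_sum_of_subset hfin (Δset.empty_eq_zero hA hp) {0, 1}
    (by
      intro t ht
      rw [Set.Finite.mem_toFinset] at ht
      obtain ⟨s, rfl⟩ := ht
      by_cases h : s ∈ A <;> simp [indR, h])]
  rw [Finset.sum_pair (by norm_num : (0:ℝ) ≠ 1)]
  have : indR A ⁻¹' {(1:ℝ)} = A := by
    ext s; by_cases h : s ∈ A <;> simp [indR, h]
  rw [this]; ring


lemma tsa {m : ℕ} {t : ℕ → ℝ} (hstep : ∀ k, 1 ≤ k → k < m → t (k+1) < t k) :
    ∀ i j, 1 ≤ i → i < j → j ≤ m → t j < t i := by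
  intro i j h1 hij hjm
  induction j with
  | zero => omega
  | succ j ih =>
    rcases Nat.lt_or_ge i j with h | h
    · exact lt_trans (hstep j (by omega) (by omega)) (ih h (by omega))
    · have : i = j := by omega
      subst this
      exact hstep i (by omega) (by omega)

lemma tsa_le {m : ℕ} {t : ℕ → ℝ} (hstep : ∀ k, 1 ≤ k → k < m → t (k+1) < t k) :
    ∀ i j, 1 ≤ i → i ≤ j → j ≤ m → t j ≤ t i := by
  intro i j h1 hij hjm
  rcases Nat.eq_or_lt_of_le hij with rfl | h
  · exact le_rfl
  · exact le_of_lt (tsa hstep i j h1 h hjm)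

lemma abel_sum {m : ℕ} (hm : 1 ≤ m) (t P : ℕ → ℝ) (hP0 : P 0 = 0) :
    ∑ i ∈ Finset.Icc 1 m, t i * (P i - P (i-1))
      = t m * P m + ∑ i ∈ Finset.Ico 1 m, (t i - t (i+1)) * P i := by
  induction m, hm using Nat.le_induction with
  | base => simp [hP0]
  | succ m hm ih =>
    rw [Finset.sum_Icc_succ_top (by omega : 1 ≤ m+1), ih,
      Finset.sum_Ico_succ_top (by omega : 1 ≤ m)]
    simp only [Nat.add_sub_cancel]
    ring

/-- Master lemma: `fint` of a chain-adapted simple function. -/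
lemma fint_chain (hA : IsSetAlg 𝓐) {p : Set S → ℝ} (hp : p ∈ Δset 𝓐)
    {φ : S → ℝ} {m : ℕ} (hm : 1 ≤ m) {t : ℕ → ℝ} {A : ℕ → Set S}
    (hstep : ∀ k, 1 ≤ k → k < m → t (k+1) < t k)
    (hA0 : A 0 = ∅) (hAm : A m = Set.univ)
    (hAmem : ∀ i ≤ m, A i ∈ 𝓐)
    (hmono : ∀ i j, i ≤ j → j ≤ m → A i ⊆ A j)
    (hpre : ∀ i, 1 ≤ i → i ≤ m → φ ⁻¹' {t i} = A i \ A (i-1)) :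
    fint p φ = t m + ∑ i ∈ Finset.Ico 1 m, (t i - t (i+1)) * p (A i) := by
  classical
  have hcover : ∀ s, ∃ i, 1 ≤ i ∧ i ≤ m ∧ φ s = t i := by
    intro s
    have hs : s ∈ A m := by rw [hAm]; trivial
    have hne : {i | s ∈ A i}.Nonempty := ⟨m, hs⟩
    have hkm : sInf {i | s ∈ A i} ≤ m := Nat.sInf_le hs
    have hmem : s ∈ A (sInf {i | s ∈ A i}) := Nat.sInf_mem hne
    have hk1 : 1 ≤ sInf {i | s ∈ A i} := by
      by_contra h
      have h0 : sInf {i | s ∈ A i} = 0 := by omega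
      rw [h0, hA0] at hmem
      exact hmem
    have hnot : s ∉ A (sInf {i | s ∈ A i} - 1) := by
      intro hmem'
      have := Nat.sInf_le (show sInf {i | s ∈ A i} - 1 ∈ {i | s ∈ A i} from hmem')
      omega
    refine ⟨sInf {i | s ∈ A i}, hk1, hkm, ?_⟩
    have h2 : s ∈ φ ⁻¹' {t (sInf {i | s ∈ A i})} := by
      rw [hpre _ hk1 hkm]; exact ⟨hmem, hnot⟩
    simpa using h2
  have hfin : (Set.range φ).Finite := by
    refine ((Set.finite_Icc 1 m).image t).subset ?_
    rintro - ⟨s, rfl⟩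
    obtain ⟨i, h1, h2, h3⟩ := hcover s
    exact ⟨i, Set.mem_Icc.2 ⟨h1, h2⟩, h3.symm⟩
  rw [fint_eq_sum_of_subset hfin (Δset.empty_eq_zero hA hp) ((Finset.Icc 1 m).image t)
    (by
      intro x hx
      rw [Set.Finite.mem_toFinset] at hx
      obtain ⟨s, rfl⟩ := hx
      obtain ⟨i, h1, h2, h3⟩ := hcover s
      exact Finset.mem_image.2 ⟨i, Finset.mem_Icc.2 ⟨h1, h2⟩, h3.symm⟩)]
  rw [Finset.sum_image (by
    intro i hi j hj hij
    simp only [Finset.coe_Icc, Set.mem_Icc] at hi hj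
    by_contra hne
    rcases Nat.lt_or_ge i j with h | h
    · exact absurd hij (ne_of_gt (tsa hstep i j hi.1 h hj.2))
    · exact absurd hij (ne_of_lt (tsa hstep j i hj.1 (by omega) hi.2)))]
  have hterm : ∀ i ∈ Finset.Icc 1 m, t i * p (φ ⁻¹' {t i}) = t i * (p (A i) - p (A (i-1))) := by
    intro i hi
    rw [Finset.mem_Icc] at hi
    rw [hpre i hi.1 hi.2, Δset.diff_eq hA hp (hAmem _ (by omega)) (hAmem _ hi.2)
      (hmono (i-1) i (by omega) hi.2)]
  rw [Finset.sum_congr rfl hterm, abel_sum hm t (fun i => p (A i)) (by show p (A 0) = 0; rw [hA0]; exact Δset.empty_eq_zero hA hp),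
    hAm, hp.1, mul_one]

/-- Every point lies in some difference `A i \ A (i-1)` with `φ = t i` there. -/
lemma chain_cover {φ : S → ℝ} {m : ℕ} {t : ℕ → ℝ} {A : ℕ → Set S}
    (hA0 : A 0 = ∅) (hAm : A m = Set.univ)
    (hpre : ∀ i, 1 ≤ i → i ≤ m → φ ⁻¹' {t i} = A i \ A (i-1)) (s : S) :
    ∃ i, 1 ≤ i ∧ i ≤ m ∧ φ s = t i ∧ s ∈ A i ∧ s ∉ A (i-1) := by
  have hs : s ∈ A m := by rw [hAm]; trivial
  have hne : {i | s ∈ A i}.Nonempty := ⟨m, hs⟩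
  have hkm : sInf {i | s ∈ A i} ≤ m := Nat.sInf_le hs
  have hmem : s ∈ A (sInf {i | s ∈ A i}) := Nat.sInf_mem hne
  have hk1 : 1 ≤ sInf {i | s ∈ A i} := by
    by_contra h
    have h0 : sInf {i | s ∈ A i} = 0 := by omega
    rw [h0, hA0] at hmem
    exact hmem
  have hnot : s ∉ A (sInf {i | s ∈ A i} - 1) := by
    intro hmem'
    have := Nat.sInf_le (show sInf {i | s ∈ A i} - 1 ∈ {i | s ∈ A i} from hmem')
    omega
  have h2 : s ∈ φ ⁻¹' {t (sInf {i | s ∈ A i})} := by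
    rw [hpre _ hk1 hkm]; exact ⟨hmem, hnot⟩
  exact ⟨sInf {i | s ∈ A i}, hk1, hkm, by simpa using h2, hmem, hnot⟩

/-- The upper level sets of a chain-adapted simple function. -/
lemma chain_upper {φ : S → ℝ} {m : ℕ} (hm : 1 ≤ m) {t : ℕ → ℝ} {A : ℕ → Set S}
    (hstep : ∀ k, 1 ≤ k → k < m → t (k+1) < t k)
    (hA0 : A 0 = ∅) (hAm : A m = Set.univ)
    (hmono : ∀ i j, i ≤ j → j ≤ m → A i ⊆ A j)
    (hpre : ∀ i, 1 ≤ i → i ≤ m → φ ⁻¹' {t i} = A i \ A (i-1)) :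
    (∀ τ : ℝ, t 1 < τ → {s | τ ≤ φ s} = ∅) ∧
    (∀ τ : ℝ, τ ≤ t m → {s | τ ≤ φ s} = Set.univ) ∧
    (∀ i, 1 ≤ i → i < m → ∀ τ : ℝ, t (i+1) < τ → τ ≤ t i → {s | τ ≤ φ s} = A i) := by
  refine ⟨?_, ?_, ?_⟩
  · intro τ hτ
    ext s
    simp only [Set.mem_setOf_eq, Set.mem_empty_iff_false, iff_false, not_le]
    obtain ⟨i, h1, h2, h3, -, -⟩ := chain_cover hA0 hAm hpre s
    rw [h3]
    exact lt_of_le_of_lt (tsa_le hstep 1 i le_rfl h1 h2) hτ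
  · intro τ hτ
    ext s
    simp only [Set.mem_setOf_eq, Set.mem_univ, iff_true]
    obtain ⟨i, h1, h2, h3, -, -⟩ := chain_cover hA0 hAm hpre s
    rw [h3]
    exact le_trans hτ (tsa_le hstep i m h1 h2 le_rfl)
  · intro i hi1 him τ hτ1 hτ2
    ext s
    simp only [Set.mem_setOf_eq]
    obtain ⟨j, h1, h2, h3, h4, h5⟩ := chain_cover hA0 hAm hpre s
    rw [h3]
    constructor
    · intro hle
      have hji : j ≤ i := by
        by_contra h
        have : t j ≤ t (i+1) := tsa_le hstep (i+1) j (by omega) (by omega) h2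
        linarith
      exact hmono j i hji (by omega) h4
    · intro hmemi
      have hji : j ≤ i := by
        by_contra h
        exact h5 (hmono i (j-1) (by omega) (by omega) hmemi)
      exact le_trans hτ2 (tsa_le hstep j i h1 hji (by omega))

lemma integral_ind_const (W U : Set ℝ) (hU : MeasurableSet U) (c : ℝ) :
    ∫ τ in W, Set.indicator U (fun _ => c) τ = (volume (W ∩ U)).toReal * c := by
  rw [MeasureTheory.setIntegral_indicator hU, MeasureTheory.setIntegral_const, smul_eq_mul]
  rfl

lemma integrable_ind_const {W U : Set ℝ} (hU : MeasurableSet U)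
    (hvol : volume (W ∩ U) < ⊤) (c : ℝ) :
    MeasureTheory.Integrable (Set.indicator U (fun _ => c)) (volume.restrict W) := by
  rw [MeasureTheory.integrable_indicator_iff hU]
  refine MeasureTheory.integrableOn_const ?_
  rw [MeasureTheory.Measure.restrict_apply hU, Set.inter_comm]
  exact hvol.ne

lemma Ioi_inter_Iic (a : ℝ) : Set.Ioi 0 ∩ Set.Iic a = Set.Ioc 0 a := by
  ext τ; simp only [Set.mem_inter_iff, Set.mem_Ioi, Set.mem_Iic, Set.mem_Ioc]

lemma Ioi_inter_Ioc (a b : ℝ) : Set.Ioi 0 ∩ Set.Ioc a b = Set.Ioc (a ⊔ 0) b := by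
  ext τ
  simp only [Set.mem_inter_iff, Set.mem_Ioi, Set.mem_Ioc, sup_lt_iff]
  tauto

lemma vol_Ioi_inter_Iic (a : ℝ) : (volume (Set.Ioi 0 ∩ Set.Iic a)).toReal = a ⊔ 0 := by
  rw [Ioi_inter_Iic, Real.volume_Ioc, ENNReal.toReal_ofReal']
  simp

lemma vol_Ioi_inter_Ioc {a b : ℝ} (hab : a ≤ b) :
    (volume (Set.Ioi 0 ∩ Set.Ioc a b)).toReal = b ⊔ 0 - a ⊔ 0 := by
  rw [Ioi_inter_Ioc, Real.volume_Ioc, ENNReal.toReal_ofReal']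
  rcases le_total a 0 with ha | ha
  · rcases le_total b 0 with hb | hb
    · simp [sup_eq_right.2 ha, sup_eq_right.2 hb]
    · simp [sup_eq_right.2 ha, sup_eq_left.2 hb]
  · have hb : (0:ℝ) ≤ b := le_trans ha hab
    simp [sup_eq_left.2 ha, sup_eq_left.2 hb, sup_eq_left.2 (by linarith : (0:ℝ) ≤ b - a)]

lemma vol_Iio_inter_Ioc {a b : ℝ} (hab : a ≤ b) :
    (volume (Set.Iio 0 ∩ Set.Ioc a b)).toReal = b ⊓ 0 - a ⊓ 0 := by
  rcases le_total (0:ℝ) a with ha | ha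
  · have : Set.Iio (0:ℝ) ∩ Set.Ioc a b = ∅ := by
      ext τ
      simp only [Set.mem_inter_iff, Set.mem_Iio, Set.mem_Ioc, Set.mem_empty_iff_false,
        iff_false, not_and]
      intro h1 h2
      linarith
    rw [this]
    rw [inf_eq_right.2 (le_trans ha hab), inf_eq_right.2 ha]
    simp
  · rcases le_total (0:ℝ) b with hb | hb
    · have : Set.Iio (0:ℝ) ∩ Set.Ioc a b = Set.Ioo a 0 := by
        ext τ
        simp only [Set.mem_inter_iff, Set.mem_Iio, Set.mem_Ioc, Set.mem_Ioo]
        constructor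
        · rintro ⟨h1, h2, h3⟩; exact ⟨h2, h1⟩
        · rintro ⟨h1, h2⟩; exact ⟨h2, h1, by linarith⟩
      rw [this, Real.volume_Ioo, ENNReal.toReal_ofReal (by linarith),
        inf_eq_right.2 hb, inf_eq_left.2 ha]
    · have hle : volume (Set.Iio 0 ∩ Set.Ioc a b) ≤ ENNReal.ofReal (b - a) := by
        rw [← Real.volume_Ioc]
        exact MeasureTheory.measure_mono Set.inter_subset_right
      have hge : ENNReal.ofReal (b - a) ≤ volume (Set.Iio 0 ∩ Set.Ioc a b) := by
        rw [← Real.volume_Ioo]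
        refine MeasureTheory.measure_mono ?_
        intro τ hτ
        simp only [Set.mem_Ioo] at hτ
        exact ⟨lt_of_lt_of_le hτ.2 hb, hτ.1, le_of_lt hτ.2⟩
      rw [le_antisymm hle hge, ENNReal.toReal_ofReal' , inf_eq_left.2 hb, inf_eq_left.2 ha]
      simp [hab]

lemma Iio_inter_Ioi (a : ℝ) : Set.Iio (0:ℝ) ∩ Set.Ioi a = Set.Ioo a 0 := by
  ext τ
  simp only [Set.mem_inter_iff, Set.mem_Iio, Set.mem_Ioi, Set.mem_Ioo]
  tauto

lemma vol_Iio_inter_Ioi (a : ℝ) : (volume (Set.Iio 0 ∩ Set.Ioi a)).toReal = 0 - a ⊓ 0 := by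
  rw [Iio_inter_Ioi, Real.volume_Ioo, ENNReal.toReal_ofReal']
  rcases le_total a 0 with ha | ha
  · rw [sup_eq_left.2 (by linarith : (0:ℝ) ≤ 0 - a), inf_eq_left.2 ha]
  · rw [sup_eq_right.2 (by linarith : 0 - a ≤ (0:ℝ)), inf_eq_right.2 ha]
    ring

/-- Exactly one interval of the chain partition contains `τ` in the middle regime. -/
lemma chain_locate {m : ℕ} {t : ℕ → ℝ}
    (hstep : ∀ k, 1 ≤ k → k < m → t (k+1) < t k) {τ : ℝ}
    (h1 : t m < τ) (h2 : τ ≤ t 1) (hm : 1 ≤ m) :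
    ∃ k, 1 ≤ k ∧ k < m ∧ t (k+1) < τ ∧ τ ≤ t k ∧
      ∀ i, 1 ≤ i → i < m → i ≠ k → τ ∉ Set.Ioc (t (i+1)) (t i) := by
  classical
  have hm2 : 2 ≤ m := by
    by_contra h
    have : m = 1 := by omega
    subst this
    linarith
  have hk1 : 1 ≤ Nat.findGreatest (fun i => τ ≤ t i) (m-1) := Nat.le_findGreatest (by omega) h2
  have hkb : Nat.findGreatest (fun i => τ ≤ t i) (m-1) ≤ m - 1 := Nat.findGreatest_le _
  have hPk : τ ≤ t (Nat.findGreatest (fun i => τ ≤ t i) (m-1)) :=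
    Nat.findGreatest_spec (P := fun i => τ ≤ t i) (m := 1) (n := m-1) (by omega) h2
  have hng : ∀ j, Nat.findGreatest (fun i => τ ≤ t i) (m-1) < j → j ≤ m - 1 →
      ¬ τ ≤ t j := fun j h1 h2 =>
    Nat.findGreatest_is_greatest (P := fun i => τ ≤ t i) (n := m-1) h1 h2
  set k := Nat.findGreatest (fun i => τ ≤ t i) (m-1) with hk
  have hnext : t (k+1) < τ := by
    rcases Nat.eq_or_lt_of_le hkb with he | hlt
    · have : k + 1 = m := by omega
      rw [this]; exact h1
    · exact lt_of_not_ge (hng (k+1) (by omega) (by omega))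
  refine ⟨k, hk1, by omega, hnext, hPk, ?_⟩
  intro i hi1 him hik hmem
  rw [Set.mem_Ioc] at hmem
  rcases Nat.lt_or_ge i k with h | h
  · have : τ ≤ t (i+1) := le_trans hPk (tsa_le hstep (i+1) k (by omega) (by omega) (by omega))
    linarith [hmem.1]
  · have : t i ≤ t (k+1) := tsa_le hstep (k+1) i (by omega) (by omega) (by omega)
    linarith [hmem.2]

/-- Master lemma: the Choquet integral of a chain-adapted simple function. -/
lemma choquet_chain {π : Set S → ℝ} (hπ0 : π ∅ = 0) (hπ1 : π Set.univ = 1)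
    {φ : S → ℝ} {m : ℕ} (hm : 1 ≤ m) {t : ℕ → ℝ} {A : ℕ → Set S}
    (hstep : ∀ k, 1 ≤ k → k < m → t (k+1) < t k)
    (hA0 : A 0 = ∅) (hAm : A m = Set.univ)
    (hmono : ∀ i j, i ≤ j → j ≤ m → A i ⊆ A j)
    (hpre : ∀ i, 1 ≤ i → i ≤ m → φ ⁻¹' {t i} = A i \ A (i-1)) :
    choquet π φ = t m + ∑ i ∈ Finset.Ico 1 m, (t i - t (i+1)) * π (A i) := by
  classical
  obtain ⟨hup_top, hup_bot, hup_mid⟩ := chain_upper hm hstep hA0 hAm hmono hpre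
  have hvanish_lo : ∀ τ : ℝ, τ ≤ t m → ∀ i ∈ Finset.Ico 1 m,
      τ ∉ Set.Ioc (t (i+1)) (t i) := by
    intro τ hb i hi
    rw [Finset.mem_Ico] at hi
    rw [Set.mem_Ioc]
    push_neg
    intro hlt
    exfalso
    have : t m ≤ t (i+1) := tsa_le hstep (i+1) m (by omega) (by omega) le_rfl
    linarith
  have hvanish_hi : ∀ τ : ℝ, t 1 < τ → ∀ i ∈ Finset.Ico 1 m,
      τ ∉ Set.Ioc (t (i+1)) (t i) := by
    intro τ h1 i hi
    rw [Finset.mem_Ico] at hi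
    rw [Set.mem_Ioc]
    push_neg
    intro hlt
    have : t i ≤ t 1 := tsa_le hstep 1 i le_rfl hi.1 (by omega)
    linarith
  -- pointwise identity for the positive part
  have hgh : (fun τ : ℝ => π {s | τ ≤ φ s})
      = fun τ => Set.indicator (Set.Iic (t m)) (fun _ => (1:ℝ)) τ
        + ∑ i ∈ Finset.Ico 1 m,
            Set.indicator (Set.Ioc (t (i+1)) (t i)) (fun _ => π (A i)) τ := by
    funext τ
    rcases le_or_gt τ (t m) with hb | hb
    · have hs0 : ∑ i ∈ Finset.Ico 1 m,
          Set.indicator (Set.Ioc (t (i+1)) (t i)) (fun _ => π (A i)) τ = 0 :=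
        Finset.sum_eq_zero fun i hi => Set.indicator_of_notMem (hvanish_lo τ hb i hi) _
      rw [hup_bot τ hb, hπ1, hs0, Set.indicator_of_mem (Set.mem_Iic.2 hb), add_zero]
    · have hi0 : Set.indicator (Set.Iic (t m)) (fun _ => (1:ℝ)) τ = 0 :=
        Set.indicator_of_notMem (by simpa using hb) _
      rcases lt_or_ge (t 1) τ with h1 | h1
      · have hs0 : ∑ i ∈ Finset.Ico 1 m,
            Set.indicator (Set.Ioc (t (i+1)) (t i)) (fun _ => π (A i)) τ = 0 :=
          Finset.sum_eq_zero fun i hi => Set.indicator_of_notMem (hvanish_hi τ h1 i hi) _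
        rw [hup_top τ h1, hπ0, hi0, hs0, add_zero]
      · obtain ⟨k, hk1, hkm, ha, hb', hoth⟩ := chain_locate hstep hb h1 hm
        have hs : ∑ i ∈ Finset.Ico 1 m,
            Set.indicator (Set.Ioc (t (i+1)) (t i)) (fun _ => π (A i)) τ = π (A k) := by
          rw [Finset.sum_eq_single_of_mem k (Finset.mem_Ico.2 ⟨hk1, hkm⟩)
            (fun i hi hik => Set.indicator_of_notMem
              (hoth i (Finset.mem_Ico.1 hi).1 (Finset.mem_Ico.1 hi).2 hik) _)]
          exact Set.indicator_of_mem (Set.mem_Ioc.2 ⟨ha, hb'⟩) (fun _ => π (A k))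
        rw [hup_mid k hk1 hkm τ ha hb', hi0, hs, zero_add]
  -- pointwise identity for the negative part
  have hgm : (fun τ : ℝ => π {s | τ ≤ φ s} - 1)
      = fun τ => (∑ i ∈ Finset.Ico 1 m,
            Set.indicator (Set.Ioc (t (i+1)) (t i)) (fun _ => π (A i) - 1) τ)
          - Set.indicator (Set.Ioi (t 1)) (fun _ => (1:ℝ)) τ := by
    funext τ
    rcases le_or_gt τ (t m) with hb | hb
    · have hs0 : ∑ i ∈ Finset.Ico 1 m,
          Set.indicator (Set.Ioc (t (i+1)) (t i)) (fun _ => π (A i) - 1) τ = 0 :=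
        Finset.sum_eq_zero fun i hi => Set.indicator_of_notMem (hvanish_lo τ hb i hi) _
      have hi0 : Set.indicator (Set.Ioi (t 1)) (fun _ => (1:ℝ)) τ = 0 :=
        Set.indicator_of_notMem (by
          simp only [Set.mem_Ioi, not_lt]
          exact le_trans hb (tsa_le hstep 1 m le_rfl hm le_rfl)) _
      rw [hup_bot τ hb, hπ1, hs0, hi0]
      ring
    · rcases lt_or_ge (t 1) τ with h1 | h1
      · have hs0 : ∑ i ∈ Finset.Ico 1 m,
            Set.indicator (Set.Ioc (t (i+1)) (t i)) (fun _ => π (A i) - 1) τ = 0 :=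
          Finset.sum_eq_zero fun i hi => Set.indicator_of_notMem (hvanish_hi τ h1 i hi) _
        rw [hup_top τ h1, hπ0, hs0, Set.indicator_of_mem (Set.mem_Ioi.2 h1) (fun _ => (1:ℝ))]
      · obtain ⟨k, hk1, hkm, ha, hb', hoth⟩ := chain_locate hstep hb h1 hm
        have hs : ∑ i ∈ Finset.Ico 1 m,
            Set.indicator (Set.Ioc (t (i+1)) (t i)) (fun _ => π (A i) - 1) τ
              = π (A k) - 1 := by
          rw [Finset.sum_eq_single_of_mem k (Finset.mem_Ico.2 ⟨hk1, hkm⟩)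
            (fun i hi hik => Set.indicator_of_notMem
              (hoth i (Finset.mem_Ico.1 hi).1 (Finset.mem_Ico.1 hi).2 hik) _)]
          exact Set.indicator_of_mem (Set.mem_Ioc.2 ⟨ha, hb'⟩) (fun _ => π (A k) - 1)
        have hi0 : Set.indicator (Set.Ioi (t 1)) (fun _ => (1:ℝ)) τ = 0 :=
          Set.indicator_of_notMem (by simpa using h1) _
        rw [hup_mid k hk1 hkm τ ha hb', hs, hi0, sub_zero]
  -- integrate
  have hab : ∀ i ∈ Finset.Ico 1 m, t (i+1) ≤ t i := by
    intro i hi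
    rw [Finset.mem_Ico] at hi
    exact tsa_le hstep i (i+1) hi.1 (by omega) (by omega)
  have hIoc_fin : ∀ (W : Set ℝ) (i : ℕ), volume (W ∩ Set.Ioc (t (i+1)) (t i)) < ⊤ := by
    intro W i
    refine lt_of_le_of_lt (MeasureTheory.measure_mono Set.inter_subset_right) ?_
    rw [Real.volume_Ioc]
    exact ENNReal.ofReal_lt_top
  have hIic_fin : volume (Set.Ioi (0:ℝ) ∩ Set.Iic (t m)) < ⊤ := by
    rw [Ioi_inter_Iic, Real.volume_Ioc]
    exact ENNReal.ofReal_lt_top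
  have hIoi_fin : volume (Set.Iio (0:ℝ) ∩ Set.Ioi (t 1)) < ⊤ := by
    rw [Iio_inter_Ioi, Real.volume_Ioo]
    exact ENNReal.ofReal_lt_top
  have hpos : (∫ τ in Set.Ioi (0:ℝ), π {s | τ ≤ φ s})
      = (t m ⊔ 0) + ∑ i ∈ Finset.Ico 1 m, (t i ⊔ 0 - t (i+1) ⊔ 0) * π (A i) := by
    rw [hgh, MeasureTheory.integral_add (integrable_ind_const measurableSet_Iic hIic_fin 1)
      (MeasureTheory.integrable_finset_sum _
        (fun i _ => integrable_ind_const measurableSet_Ioc (hIoc_fin _ i) _)),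
      MeasureTheory.integral_finset_sum _
        (fun i _ => integrable_ind_const measurableSet_Ioc (hIoc_fin _ i) _),
      integral_ind_const _ _ measurableSet_Iic, vol_Ioi_inter_Iic, mul_one]
    congr 1
    refine Finset.sum_congr rfl fun i hi => ?_
    rw [integral_ind_const _ _ measurableSet_Ioc, vol_Ioi_inter_Ioc (hab i hi)]
  have hneg : (∫ τ in Set.Iio (0:ℝ), (π {s | τ ≤ φ s} - 1))
      = (∑ i ∈ Finset.Ico 1 m, (t i ⊓ 0 - t (i+1) ⊓ 0) * (π (A i) - 1)) - (0 - t 1 ⊓ 0) := by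
    rw [hgm, MeasureTheory.integral_sub (MeasureTheory.integrable_finset_sum _
        (fun i _ => integrable_ind_const measurableSet_Ioc (hIoc_fin _ i) _))
      (integrable_ind_const measurableSet_Ioi hIoi_fin 1),
      MeasureTheory.integral_finset_sum _
        (fun i _ => integrable_ind_const measurableSet_Ioc (hIoc_fin _ i) _),
      integral_ind_const _ _ measurableSet_Ioi, vol_Iio_inter_Ioi, mul_one]
    congr 1
    refine Finset.sum_congr rfl fun i hi => ?_
    rw [integral_ind_const _ _ measurableSet_Ioc, vol_Iio_inter_Ioc (hab i hi)]
  have hsplit : ∑ i ∈ Finset.Ico 1 m, (t i ⊔ 0 - t (i+1) ⊔ 0) * π (A i)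
      + ∑ i ∈ Finset.Ico 1 m, (t i ⊓ 0 - t (i+1) ⊓ 0) * (π (A i) - 1)
      = ∑ i ∈ Finset.Ico 1 m, (t i - t (i+1)) * π (A i)
        - ∑ i ∈ Finset.Ico 1 m, (t i ⊓ 0 - t (i+1) ⊓ 0) := by
    rw [← Finset.sum_add_distrib, ← Finset.sum_sub_distrib]
    refine Finset.sum_congr rfl fun i _ => ?_
    linear_combination (π (A i)) * max_add_min (t i) 0 - (π (A i)) * max_add_min (t (i+1)) 0
  have htel : ∑ i ∈ Finset.Ico 1 m, (t i ⊓ 0 - t (i+1) ⊓ 0) = t 1 ⊓ 0 - t m ⊓ 0 := by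
    have h1 : ∑ k ∈ Finset.range (m-1),
        ((fun j => t (1+j) ⊓ 0) k - (fun j => t (1+j) ⊓ 0) (k+1))
        = (fun j => t (1+j) ⊓ 0) 0 - (fun j => t (1+j) ⊓ 0) (m-1) :=
      Finset.sum_range_sub' (fun j => t (1+j) ⊓ 0) (m-1)
    simp only at h1
    rw [show 1 + (m-1) = m from by omega] at h1
    rw [Finset.sum_Ico_eq_sum_range, ← h1]
    exact Finset.sum_congr rfl fun k _ => by rw [show 1 + k + 1 = 1 + (k+1) from by omega]
  show (∫ τ in Set.Ioi (0:ℝ), π {s | τ ≤ φ s})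
      + (∫ τ in Set.Iio (0:ℝ), (π {s | τ ≤ φ s} - 1))
      = t m + ∑ i ∈ Finset.Ico 1 m, (t i - t (i+1)) * π (A i)
  rw [hpos, hneg]
  linarith [hsplit, htel, max_add_min (t m) 0]

variable {V : Type*} [AddCommGroup V] [Module ℝ V]

lemma constAct_mem (hA : IsSetAlg 𝓐) {X : Set V} {x : V} (hx : x ∈ X) :
    constAct (S := S) x ∈ Acts 𝓐 X := by
  refine ⟨fun _ => hx, ?_, ?_⟩
  · exact (Set.finite_singleton x).subset (by rintro - ⟨s, rfl⟩; rfl)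
  · intro v
    rcases eq_or_ne v x with rfl | h
    · have : constAct (S := S) v ⁻¹' {v} = Set.univ := by
        ext s; simp [constAct]
      rw [this]; exact hA.univ_mem
    · have : constAct (S := S) x ⁻¹' {v} = ∅ := by
        ext s; simp [constAct, Ne.symm h]
      rw [this]; exact hA.empty_mem

lemma choquet_const [Nonempty S] {π : Set S → ℝ} (hπ0 : π ∅ = 0) (hπ1 : π Set.univ = 1)
    (c : ℝ) : choquet π (fun _ : S => c) = c := by
  have h := choquet_chain (φ := fun _ : S => c) (m := 1) (t := fun _ => c)
    (A := fun i => if i = 0 then (∅ : Set S) else Set.univ) hπ0 hπ1 le_rfl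
    (by intro k h1 h2; omega)
    (by simp) (by simp)
    (by
      intro i j hij hjm
      show (if i = 0 then (∅ : Set S) else Set.univ) ⊆ (if j = 0 then (∅ : Set S) else Set.univ)
      rcases Nat.eq_zero_or_pos i with rfl | hi
      · simp
      · have hj : j ≠ 0 := by omega
        have hi' : i ≠ 0 := by omega
        simp [hi', hj])
    (by
      intro i h1 h2
      have : i = 1 := by omega
      subst this
      simp)
  simpa using h

lemma uxf_eq_choquet [Nonempty S] (hA : IsSetAlg 𝓐) {X : Set V} {π : Set S → ℝ}
    (hπ : IsCapacity 𝓐 π) {R : (S → V) → (S → V) → Prop} {u : V → ℝ}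
    (hrep : ∀ f ∈ Acts 𝓐 X, ∀ g ∈ Acts 𝓐 X,
      (R f g ↔ choquet π (uAct u g) ≤ choquet π (uAct u f)))
    {xf : (S → V) → V} (hxf : IsCE 𝓐 X R xf) {f : S → V}
    (hf : f ∈ Acts 𝓐 X) :
    u (xf f) = choquet π (uAct u f) := by
  obtain ⟨hmem, h1, h2⟩ := hxf f hf
  have hca := constAct_mem (S := S) hA hmem
  have e1 := (hrep f hf _ hca).1 h1
  have e2 := (hrep _ hca f hf).1 h2
  have hcc : choquet π (uAct u (constAct (S := S) (xf f))) = u (xf f) := by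
    have he : uAct u (constAct (S := S) (xf f)) = fun _ : S => u (xf f) := rfl
    rw [he]
    exact choquet_const hπ.1 hπ.2.1 _
  rw [hcc] at e1 e2
  linarith

/-- Measurability of level preimages of `uAct u f`. -/
lemma uAct_pre_mem (hA : IsSetAlg 𝓐) {X : Set V} {u : V → ℝ} {f : S → V}
    (hf : f ∈ Acts 𝓐 X) (r : ℝ) : (uAct u f) ⁻¹' {r} ∈ 𝓐 := by
  classical
  have h : (uAct u f) ⁻¹' {r}
      = ⋃ v ∈ hf.2.1.toFinset.filter (fun v => u v = r), f ⁻¹' {v} := by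
    ext s
    simp only [Set.mem_preimage, Set.mem_singleton_iff, Set.mem_iUnion, Finset.mem_filter,
      Set.Finite.mem_toFinset, uAct]
    constructor
    · intro h
      exact ⟨f s, ⟨⟨s, rfl⟩, h⟩, rfl⟩
    · rintro ⟨v, ⟨-, hv⟩, hsv⟩
      rw [hsv, hv]
  rw [h]
  exact hA.biUnion_mem _ _ (fun v _ => hf.2.2 v)

lemma uAct_range_finite {X : Set V} {u : V → ℝ} {f : S → V} (hf : f ∈ Acts 𝓐 X) :
    (Set.range (uAct u f)).Finite := by
  have : Set.range (uAct u f) = u '' Set.range f := (Set.range_comp u f)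
  rw [this]
  exact hf.2.1.image u

/-- The canonical descending chain associated with an act. -/
lemma act_chain [Nonempty S] (hA : IsSetAlg 𝓐) {X : Set V} {u : V → ℝ} {f : S → V}
    (hf : f ∈ Acts 𝓐 X) :
    ∃ (m : ℕ) (t : ℕ → ℝ) (A : ℕ → Set S), 1 ≤ m ∧
      (∀ k, 1 ≤ k → k < m → t (k+1) < t k) ∧
      A 0 = ∅ ∧ A m = Set.univ ∧ (∀ i ≤ m, A i ∈ 𝓐) ∧
      (∀ i j, i ≤ j → j ≤ m → A i ⊆ A j) ∧ (∀ i < m, A i ⊂ A (i+1)) ∧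
      (∀ i, 1 ≤ i → i ≤ m → (uAct u f) ⁻¹' {t i} = A i \ A (i-1)) := by
  classical
  set φ := uAct u f with hφ
  have hfin : (Set.range φ).Finite := uAct_range_finite hf
  set R : Finset ℝ := hfin.toFinset with hR
  have hRne : R.Nonempty := by
    obtain ⟨s⟩ := (inferInstance : Nonempty S)
    exact ⟨φ s, by simp [hR, Set.Finite.mem_toFinset]⟩
  set m := R.card with hmcard
  have hm : 1 ≤ m := Finset.card_pos.2 hRne
  set e := R.orderEmbOfFin (rfl : R.card = m) with he
  have hmem_e : ∀ j : Fin m, (e j : ℝ) ∈ R := fun j => Finset.orderEmbOfFin_mem R rfl j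
  have hsurj : ∀ r ∈ R, ∃ j : Fin m, e j = r := by
    intro r hr
    have : r ∈ Set.range e := by
      rw [Finset.range_orderEmbOfFin]
      exact hr
    exact this
  have hrange : ∀ s : S, φ s ∈ R := fun s => by simp [hR, Set.Finite.mem_toFinset]
  set t : ℕ → ℝ := fun i => if h : 1 ≤ i ∧ i ≤ m then e ⟨m - i, by omega⟩ else 0 with ht
  have htval : ∀ i (h : 1 ≤ i ∧ i ≤ m), t i = e ⟨m - i, by omega⟩ := by
    intro i h
    simp only [ht, dif_pos h]
  have hstep : ∀ k, 1 ≤ k → k < m → t (k+1) < t k := by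
    intro k h1 h2
    rw [htval k ⟨h1, by omega⟩, htval (k+1) ⟨by omega, by omega⟩]
    exact e.strictMono (by simp only [Fin.mk_lt_mk]; omega)
  -- each value t i is ≤ t 1 and ≥ t m; and every φ s equals some t i
  have hcov : ∀ s : S, ∃ i, 1 ≤ i ∧ i ≤ m ∧ φ s = t i := by
    intro s
    obtain ⟨j, hj⟩ := hsurj (φ s) (hrange s)
    refine ⟨m - j, by omega, by omega, ?_⟩
    rw [htval (m - j) ⟨by omega, by omega⟩, ← hj]
    congr 1
    ext
    simp
    omega
  set A : ℕ → Set S := fun i => if i = 0 then ∅ else {s | t i ≤ φ s} with hAdef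
  have hA0 : A 0 = ∅ := by simp [hAdef]
  have hAval : ∀ i, i ≠ 0 → A i = {s | t i ≤ φ s} := by
    intro i h
    simp [hAdef, h]
  have hAm : A m = Set.univ := by
    rw [hAval m (by omega)]
    ext s
    simp only [Set.mem_setOf_eq, Set.mem_univ, iff_true]
    obtain ⟨i, h1, h2, h3⟩ := hcov s
    rw [h3]
    exact tsa_le hstep i m h1 h2 le_rfl
  have hmono : ∀ i j, i ≤ j → j ≤ m → A i ⊆ A j := by
    intro i j hij hjm
    rcases Nat.eq_zero_or_pos i with rfl | hi
    · rw [hA0]; exact Set.empty_subset _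
    · rw [hAval i (by omega), hAval j (by omega)]
      intro s hs
      exact le_trans (tsa_le hstep i j (by omega) hij hjm) hs
  have hAmem : ∀ i ≤ m, A i ∈ 𝓐 := by
    intro i him
    rcases Nat.eq_zero_or_pos i with rfl | hi
    · rw [hA0]; exact hA.empty_mem
    · rw [hAval i (by omega)]
      have hset : {s | t i ≤ φ s} = ⋃ r ∈ R.filter (fun r => t i ≤ r), φ ⁻¹' {r} := by
        ext s
        simp only [Set.mem_setOf_eq, Set.mem_iUnion, Finset.mem_filter, Set.mem_preimage,
          Set.mem_singleton_iff]
        constructor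
        · intro h
          exact ⟨φ s, ⟨hrange s, h⟩, rfl⟩
        · rintro ⟨r, ⟨-, hr⟩, hsr⟩
          rw [hsr]; exact hr
      rw [hset]
      exact hA.biUnion_mem _ _ (fun r _ => uAct_pre_mem hA hf r)
  have hpre : ∀ i, 1 ≤ i → i ≤ m → φ ⁻¹' {t i} = A i \ A (i-1) := by
    intro i h1 h2
    ext s
    simp only [Set.mem_preimage, Set.mem_singleton_iff, Set.mem_diff]
    constructor
    · intro h
      constructor
      · rw [hAval i (by omega)]
        exact le_of_eq h.symm
      · rcases Nat.eq_zero_or_pos (i-1) with h0 | hpos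
        · rw [h0, hA0]; exact not_false
        · rw [hAval (i-1) (by omega)]
          simp only [Set.mem_setOf_eq, not_le, h]
          exact tsa hstep (i-1) i (by omega) (by omega) h2
    · rintro ⟨hin, hout⟩
      rw [hAval i (by omega)] at hin
      simp only [Set.mem_setOf_eq] at hin
      obtain ⟨j, hj1, hj2, hj3⟩ := hcov s
      have hji : j ≤ i := by
        by_contra hc
        have : t j < t (i-1+1) := by
          rcases Nat.eq_or_lt_of_le (show i + 1 ≤ j by omega) with rfl | hlt
          · rw [show i - 1 + 1 = i by omega]
            exact tsa hstep i (i+1) h1 (by omega) (by omega)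
          · rw [show i - 1 + 1 = i by omega]
            exact tsa hstep i j h1 (by omega) hj2
        rw [hj3] at hin
        have : t j < t i := by rw [show i - 1 + 1 = i from by omega] at this; exact this
        linarith
      have hij : i ≤ j := by
        by_contra hc
        apply hout
        rcases Nat.eq_zero_or_pos (i-1) with h0 | hpos
        · omega
        · rw [hAval (i-1) (by omega)]
          simp only [Set.mem_setOf_eq]
          rw [hj3]
          exact tsa_le hstep j (i-1) hj1 (by omega) (by omega)
      have : j = i := by omega
      rw [hj3, this]
  have hstrict : ∀ i < m, A i ⊂ A (i+1) := by
    intro i him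
    refine ⟨hmono i (i+1) (by omega) (by omega), ?_⟩
    intro hsub
    have hmemt : t (i+1) ∈ R := by
      rw [htval (i+1) ⟨by omega, by omega⟩]
      exact hmem_e _
    rw [hR, Set.Finite.mem_toFinset] at hmemt
    obtain ⟨s, hs⟩ := hmemt
    have hin : s ∈ A (i+1) := by
      rw [hAval (i+1) (by omega)]
      simp only [Set.mem_setOf_eq]
      exact le_of_eq hs.symm
    have := hsub hin
    rcases Nat.eq_zero_or_pos i with rfl | hi
    · rw [hA0] at this; exact this
    · rw [hAval i (by omega)] at this
      simp only [Set.mem_setOf_eq] at this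
      have h2 : t (i+1) < t i := hstep i hi him
      rw [hs] at this
      linarith [this]
  exact ⟨m, t, A, hm, hstep, hA0, hAm, hAmem, hmono, hstrict, hpre⟩

lemma fint_continuous {ψ : S → ℝ} (hψ : IsSimpleFn 𝓐 ψ) :
    @Continuous _ _ (weakStar 𝓐) _ (fun p : Set S → ℝ => fint p ψ) := by
  letI := weakStar 𝓐
  have h : (fun p : Set S → ℝ => fint p ψ)
      = (fun F : {φ : S → ℝ // IsSimpleFn 𝓐 φ} → ℝ => F ⟨ψ, hψ⟩) ∘
        (fun p => fun φ : {φ : S → ℝ // IsSimpleFn 𝓐 φ} => fint p φ.1) := rfl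
  rw [h]
  exact (continuous_apply _).comp continuous_induced_dom

lemma sep_down {n : ℕ} {K : Set (Fin n → ℝ)} (hKne : K.Nonempty)
    (hKc : Convex ℝ K) (hKcp : IsCompact K) (d : Fin n → ℝ)
    (hdis : ∀ x ∈ K, ¬ (∀ i, x i ≤ d i)) :
    ∃ (μ : Fin n → ℝ) (a b : ℝ), (∀ i, 0 ≤ μ i) ∧
      (∑ i, d i * μ i) < a ∧ a < b ∧ ∀ x ∈ K, b < ∑ i, x i * μ i := by
  classical
  set T : Set (Fin n → ℝ) := {x | ∀ i, x i ≤ d i} with hT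
  have hTc : Convex ℝ T := by
    intro x hx y hy a b ha hb hab
    intro i
    show (a • x + b • y) i ≤ d i
    have hx' : x i ≤ d i := hx i
    have hy' : y i ≤ d i := hy i
    calc (a • x + b • y) i = a * x i + b * y i := rfl
    _ ≤ a * d i + b * d i :=
        add_le_add (mul_le_mul_of_nonneg_left hx' ha) (mul_le_mul_of_nonneg_left hy' hb)
    _ = d i := by rw [← add_mul, hab, one_mul]
  have hTcl : IsClosed T := by
    have h : T = ⋂ i, {x : Fin n → ℝ | x i ≤ d i} := by
      ext x; simp [hT, Set.mem_iInter]
    rw [h]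
    exact isClosed_iInter (fun i => IsClosed.preimage (continuous_apply i) isClosed_Iic)
  have hdisj : Disjoint K T := Set.disjoint_left.2 (fun {x} hx hxT => hdis x hx hxT)
  obtain ⟨g, a, b, hKa, hab, hTb⟩ :=
    geometric_hahn_banach_compact_closed hKc hKcp hTc hTcl hdisj
  have hglin : ∀ x : Fin n → ℝ, g x = ∑ i, x i * g (fun j => if i = j then 1 else 0) := by
    intro x
    conv_lhs => rw [pi_eq_sum_univ x]
    rw [map_sum]
    simp only [ContinuousLinearMap.map_smul, smul_eq_mul]
  have hneg : ∀ i, g (fun j => if i = j then 1 else 0) ≤ 0 := by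
    intro i
    by_contra hpos
    push_neg at hpos
    have hdT : d ∈ T := fun i => le_rfl
    have hgd : b < g d := hTb d hdT
    set r : ℝ := (g d - b) / g (fun j => if i = j then 1 else 0) with hr
    have hrpos : 0 < r := div_pos (by linarith) hpos
    have hmem : (d - r • (fun j : Fin n => if i = j then (1:ℝ) else 0)) ∈ T := by
      intro j
      show d j - r * (if i = j then (1:ℝ) else 0) ≤ d j
      rcases eq_or_ne i j with rfl | hne
      · rw [if_pos rfl, mul_one]
        linarith [hrpos]
      · simp [hne]
    have hc := hTb _ hmem
    rw [map_sub, ContinuousLinearMap.map_smul, smul_eq_mul, hr,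
      div_mul_cancel₀ _ (ne_of_gt hpos)] at hc
    linarith
  set μ : Fin n → ℝ := fun i => -(g (fun j => if i = j then 1 else 0)) with hμdef
  have hμval : ∀ i, μ i = -(g (fun j => if i = j then 1 else 0)) := fun i => rfl
  have hsumg : ∀ x : Fin n → ℝ, ∑ i, x i * μ i = -g x := by
    intro x
    rw [hglin x, ← Finset.sum_neg_distrib]
    exact Finset.sum_congr rfl fun i _ => by rw [hμval]; ring
  refine ⟨μ, -b, -a, ?_, ?_, by linarith, ?_⟩
  · intro i
    rw [hμval]
    have := hneg i
    linarith
  · rw [hsumg d]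
    have hdT : d ∈ T := fun i => le_rfl
    have := hTb d hdT
    linarith
  · intro x hx
    rw [hsumg x]
    have := hKa x hx
    linarith

lemma sep_up {n : ℕ} {K : Set (Fin n → ℝ)} (hKne : K.Nonempty)
    (hKc : Convex ℝ K) (hKcp : IsCompact K) (d : Fin n → ℝ)
    (hdis : ∀ x ∈ K, ¬ (∀ i, d i ≤ x i)) :
    ∃ (μ : Fin n → ℝ) (a b : ℝ), (∀ i, 0 ≤ μ i) ∧
      (∀ x ∈ K, ∑ i, x i * μ i < a) ∧ a < b ∧ b < ∑ i, d i * μ i := by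
  have hKne' : ((fun x : Fin n → ℝ => -x) '' K).Nonempty := hKne.image _
  have hKc' : Convex ℝ ((fun x : Fin n → ℝ => -x) '' K) :=
    hKc.is_linear_image (IsLinearMap.isLinearMap_neg)
  have hKcp' : IsCompact ((fun x : Fin n → ℝ => -x) '' K) :=
    hKcp.image continuous_neg
  obtain ⟨μ, a, b, hμ, h1, h2, h3⟩ := sep_down hKne' hKc' hKcp' (-d) (by
    rintro - ⟨x, hx, rfl⟩ hle
    exact hdis x hx (fun i => by have := hle i; simp only [Pi.neg_apply] at this; linarith))
  refine ⟨μ, -b, -a, hμ, ?_, by linarith, ?_⟩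
  · intro x hx
    have := h3 (-x) ⟨x, hx, rfl⟩
    have h4 : ∑ i, (-x) i * μ i = -∑ i, x i * μ i := by
      rw [← Finset.sum_neg_distrib]
      exact Finset.sum_congr rfl (fun i _ => by rw [Pi.neg_apply, neg_mul])
    rw [h4] at this
    linarith
  · have h4 : ∑ i, (-d) i * μ i = -∑ i, d i * μ i := by
      rw [← Finset.sum_neg_distrib]
      exact Finset.sum_congr rfl (fun i _ => by rw [Pi.neg_apply, neg_mul])
    rw [h4] at h1
    linarith

/-- Build an act adapted to a given chain with prescribed positive utility weights. -/
lemma chain_act [Nonempty S] (hA : IsSetAlg 𝓐) {X : Set V} (hX : X.Nonempty)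
    {u : V → ℝ} {δ : ℝ} (hball : ∀ r : ℝ, 0 < r → r < δ → r ∈ u '' X)
    {n : ℕ} (hn : 1 ≤ n) {A : ℕ → Set S}
    (hA0 : A 0 = ∅) (hAn : A n = Set.univ) (hAmem : ∀ i ≤ n, A i ∈ 𝓐)
    (hchain : ∀ i < n, A i ⊂ A (i+1))
    {lam : ℕ → ℝ} (hlam : ∀ k, 1 ≤ k → k ≤ n → 0 < lam k)
    (hsum : ∑ k ∈ Finset.Icc 1 n, lam k < δ) :
    ∃ f ∈ Acts 𝓐 X,
      (∀ p ∈ Δset 𝓐, fint p (uAct u f) = ∑ k ∈ Finset.Icc 1 n, lam k * p (A k)) ∧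
      (∀ π : Set S → ℝ, π ∅ = 0 → π Set.univ = 1 →
        choquet π (uAct u f) = ∑ k ∈ Finset.Icc 1 n, lam k * π (A k)) := by
  classical
  have hmono : ∀ i j, i ≤ j → j ≤ n → A i ⊆ A j := by
    intro i j hij hjn
    induction j with
    | zero =>
      have : i = 0 := by omega
      subst this
      exact subset_rfl
    | succ j ih =>
      rcases Nat.eq_or_lt_of_le hij with rfl | h
      · exact subset_rfl
      · exact (ih (by omega) (by omega)).trans (hchain j (by omega)).1
  set t : ℕ → ℝ := fun k => ∑ i ∈ Finset.Icc k n, lam i with htdef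
  have htrec : ∀ k, 1 ≤ k → k ≤ n → t k = lam k + t (k+1) := by
    intro k h1 h2
    have hins : Finset.Icc k n = insert k (Finset.Icc (k+1) n) := by
      ext x
      simp only [Finset.mem_Icc, Finset.mem_insert]
      omega
    have hnot : k ∉ Finset.Icc (k+1) n := by simp [Finset.mem_Icc]
    simp only [htdef]
    rw [hins, Finset.sum_insert hnot]
  have hstep : ∀ k, 1 ≤ k → k < n → t (k+1) < t k := by
    intro k h1 h2
    have := htrec k h1 (by omega)
    have := hlam k h1 (by omega)
    linarith
  have htpos : ∀ k, 1 ≤ k → k ≤ n → 0 < t k := by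
    intro k h1 h2
    simp only [htdef]
    refine Finset.sum_pos (fun i hi => ?_) ⟨n, by simp [Finset.mem_Icc]; omega⟩
    rw [Finset.mem_Icc] at hi
    exact hlam i (by omega) hi.2
  have htle : ∀ k, 1 ≤ k → k ≤ n → t k ≤ ∑ i ∈ Finset.Icc 1 n, lam i := by
    intro k h1 h2
    simp only [htdef]
    refine Finset.sum_le_sum_of_subset_of_nonneg ?_ (fun i hi _ => ?_)
    · intro x hx
      rw [Finset.mem_Icc] at hx ⊢
      omega
    · rw [Finset.mem_Icc] at hi
      exact le_of_lt (hlam i hi.1 hi.2)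
  have htX : ∀ k, 1 ≤ k → k ≤ n → t k ∈ u '' X := by
    intro k h1 h2
    exact hball _ (htpos k h1 h2) (lt_of_le_of_lt (htle k h1 h2) hsum)
  set xch : ℕ → V := fun k =>
    if h : ∃ v ∈ X, u v = t k then h.choose else hX.some with hxch
  have hxchX : ∀ k, xch k ∈ X := by
    intro k
    simp only [hxch]
    split
    · rename_i h
      exact h.choose_spec.1
    · exact hX.some_mem
  have hxchval : ∀ k, 1 ≤ k → k ≤ n → u (xch k) = t k := by
    intro k h1 h2
    obtain ⟨v, hv, huv⟩ := htX k h1 h2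
    have hex : ∃ v ∈ X, u v = t k := ⟨v, hv, huv⟩
    simp only [hxch, dif_pos hex]
    exact hex.choose_spec.2
  -- the index function
  have hidx : ∀ s : S, 1 ≤ sInf {k | s ∈ A k} ∧ sInf {k | s ∈ A k} ≤ n ∧
      s ∈ A (sInf {k | s ∈ A k}) ∧ s ∉ A (sInf {k | s ∈ A k} - 1) := by
    intro s
    have hs : s ∈ A n := by rw [hAn]; trivial
    have hne : {k | s ∈ A k}.Nonempty := ⟨n, hs⟩
    have hkm : sInf {k | s ∈ A k} ≤ n := Nat.sInf_le hs
    have hmem : s ∈ A (sInf {k | s ∈ A k}) := Nat.sInf_mem hne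
    have hk1 : 1 ≤ sInf {k | s ∈ A k} := by
      by_contra h
      have h0 : sInf {k | s ∈ A k} = 0 := by omega
      rw [h0, hA0] at hmem
      exact hmem
    refine ⟨hk1, hkm, hmem, ?_⟩
    intro hmem'
    have := Nat.sInf_le (show sInf {k | s ∈ A k} - 1 ∈ {k | s ∈ A k} from hmem')
    omega
  have hidx_eq : ∀ (s : S) (k : ℕ), 1 ≤ k → k ≤ n → s ∈ A k → s ∉ A (k-1) →
      sInf {k | s ∈ A k} = k := by
    intro s k h1 h2 hin hout
    obtain ⟨hi1, hin', himem, hinot⟩ := hidx s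
    have hle : sInf {k | s ∈ A k} ≤ k := Nat.sInf_le hin
    have hge : k ≤ sInf {k | s ∈ A k} := by
      by_contra h
      exact hout (hmono _ (k-1) (by omega) (by omega) himem)
    omega
  set f : S → V := fun s => xch (sInf {k | s ∈ A k}) with hfdef
  have hfval : ∀ s, uAct u f s = t (sInf {k | s ∈ A k}) := by
    intro s
    obtain ⟨h1, h2, -, -⟩ := hidx s
    exact hxchval _ h1 h2
  have hpre : ∀ i, 1 ≤ i → i ≤ n → (uAct u f) ⁻¹' {t i} = A i \ A (i-1) := by
    intro i h1 h2
    ext s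
    obtain ⟨hi1, hin, himem, hinot⟩ := hidx s
    simp only [Set.mem_preimage, Set.mem_singleton_iff, Set.mem_diff]
    rw [hfval s]
    constructor
    · intro h
      have : sInf {k | s ∈ A k} = i := by
        by_contra hc
        rcases Nat.lt_or_ge (sInf {k | s ∈ A k}) i with hlt | hgt
        · have := tsa hstep (sInf {k | s ∈ A k}) i hi1 hlt h2
          linarith
        · have := tsa hstep i (sInf {k | s ∈ A k}) h1 (by omega) hin
          linarith
      rw [← this]
      exact ⟨himem, hinot⟩
    · rintro ⟨hin', hout'⟩
      rw [hidx_eq s i h1 h2 hin' hout']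
  have hfActs : f ∈ Acts 𝓐 X := by
    refine ⟨fun s => hxchX _, ?_, ?_⟩
    · refine ((Set.finite_Iic n).image xch).subset ?_
      rintro - ⟨s, rfl⟩
      exact ⟨sInf {k | s ∈ A k}, (hidx s).2.1, rfl⟩
    · intro v
      have hset : f ⁻¹' {v}
          = ⋃ k ∈ (Finset.Icc 1 n).filter (fun k => xch k = v), (A k \ A (k-1)) := by
        ext s
        obtain ⟨hi1, hin, himem, hinot⟩ := hidx s
        simp only [Set.mem_preimage, Set.mem_singleton_iff, Set.mem_iUnion,
          Finset.mem_filter, Finset.mem_Icc, Set.mem_diff]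
        constructor
        · intro h
          exact ⟨sInf {k | s ∈ A k}, ⟨⟨hi1, hin⟩, h⟩, himem, hinot⟩
        · rintro ⟨k, ⟨⟨hk1, hk2⟩, hkv⟩, hkin, hkout⟩
          rw [hfdef]
          simp only
          rw [hidx_eq s k hk1 hk2 hkin hkout]
          exact hkv
      rw [hset]
      exact hA.biUnion_mem _ _ (fun k hk => hA.diff_mem
        (hAmem k (by rw [Finset.mem_filter, Finset.mem_Icc] at hk; omega))
        (hAmem (k-1) (by rw [Finset.mem_filter, Finset.mem_Icc] at hk; omega)))
  -- converting the chain formula into the weighted sum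
  have hconv : ∀ q : Set S → ℝ, q (A n) = 1 →
      t n + ∑ i ∈ Finset.Ico 1 n, (t i - t (i+1)) * q (A i)
        = ∑ k ∈ Finset.Icc 1 n, lam k * q (A k) := by
    intro q hq
    have hicc : Finset.Icc 1 n = Finset.Ico 1 (n+1) := by
      ext x
      simp only [Finset.mem_Icc, Finset.mem_Ico]
      omega
    rw [hicc, Finset.sum_Ico_succ_top hn]
    have htn : t n = lam n := by
      simp only [htdef]
      rw [show Finset.Icc n n = {n} from Finset.Icc_self n, Finset.sum_singleton]
    have hterm : ∀ i ∈ Finset.Ico 1 n, (t i - t (i+1)) * q (A i) = lam i * q (A i) := by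
      intro i hi
      rw [Finset.mem_Ico] at hi
      have := htrec i hi.1 (by omega)
      have heq : t i - t (i+1) = lam i := by linarith
      rw [heq]
    rw [Finset.sum_congr rfl hterm, htn, hq, mul_one]
    ring
  refine ⟨f, hfActs, ?_, ?_⟩
  · intro p hp
    rw [fint_chain hA hp hn hstep hA0 hAn hAmem hmono hpre]
    exact hconv p (by rw [hAn]; exact hp.1)
  · intro π hπ0 hπ1
    rw [choquet_chain hπ0 hπ1 hn hstep hA0 hAn hmono hpre]
    exact hconv π (by rw [hAn]; exact hπ1)

lemma sum_Icc_fin (n : ℕ) (g : ℕ → ℝ) :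
    ∑ k ∈ Finset.Icc 1 n, g k = ∑ i : Fin n, g (i.val + 1) := by
  have h1 : Finset.Icc 1 n = Finset.Ico 1 (n+1) := by
    ext x
    simp only [Finset.mem_Icc, Finset.mem_Ico]
    omega
  rw [h1, Finset.sum_Ico_eq_sum_range]
  have h2 : ∑ i : Fin n, g (i.val + 1) = ∑ i ∈ Finset.range n, g (i + 1) :=
    Fin.sum_univ_eq_sum_range (fun i => g (i + 1)) n
  rw [h2]
  simp only [Nat.add_sub_cancel]
  exact Finset.sum_congr rfl fun k _ => by rw [Nat.add_comm]

end Aux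
theorem stmt16 {S V : Type*} [Nonempty S] [AddCommGroup V] [Module ℝ V]
    (𝓐 : Set (Set S)) (hA : IsSetAlg 𝓐)
    (X : Set V) (hX : X.Nonempty) (hXc : Convex ℝ X)
    (π : Set S → ℝ) (hπ : IsCapacity 𝓐 π)
    (R : (S → V) → (S → V) → Prop) (hpref : IBPref 𝓐 X R)
    (u : V → ℝ) (hu : IsNonconstAffine X u) (h0 : (0 : ℝ) ∈ interior (u '' X))
    (hrep : ∀ f ∈ Acts 𝓐 X, ∀ g ∈ Acts 𝓐 X,
      (R f g ↔ choquet π (uAct u g) ≤ choquet π (uAct u f)))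
    (xf : (S → V) → V) (hxf : IsCE 𝓐 X R xf) :
    (∀ P : Set (Set S → ℝ), P ⊆ Δset 𝓐 → P.Nonempty → Convex ℝ P →
      (@IsCompact _ (weakStar 𝓐) P) →
      (P ∈ PstarOf 𝓐 X u xf ↔
        ∀ (n : ℕ) (A : ℕ → Set S), A 0 = ∅ → A n = Set.univ →
          (∀ i ≤ n, A i ∈ 𝓐) → (∀ i < n, A i ⊂ A (i + 1)) →
          (P ∩ {p | p ∈ Δset 𝓐 ∧ ∀ i, 1 ≤ i → i ≤ n → p (A i) ≤ π (A i)}).Nonempty)) ∧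
    (∀ Q : Set (Set S → ℝ), Q ⊆ Δset 𝓐 → Q.Nonempty → Convex ℝ Q →
      (@IsCompact _ (weakStar 𝓐) Q) →
      (Q ∈ QstarOf 𝓐 X u xf ↔
        ∀ (n : ℕ) (A : ℕ → Set S), A 0 = ∅ → A n = Set.univ →
          (∀ i ≤ n, A i ∈ 𝓐) → (∀ i < n, A i ⊂ A (i + 1)) →
          (Q ∩ {q | q ∈ Δset 𝓐 ∧ ∀ i, 1 ≤ i → i ≤ n → π (A i) ≤ q (A i)}).Nonempty)) := by
  classical
  obtain ⟨δ, hδpos, hball⟩ : ∃ δ > 0, ∀ r : ℝ, 0 < r → r < δ → r ∈ u '' X := by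
    obtain ⟨ε, hε, hb⟩ := Metric.mem_nhds_iff.1 (mem_interior_iff_mem_nhds.1 h0)
    refine ⟨ε, hε, fun r h1 h2 => hb ?_⟩
    rw [Metric.mem_ball, Real.dist_eq, sub_zero, abs_of_pos h1]
    exact h2
  have huxf : ∀ f ∈ Acts 𝓐 X, u (xf f) = choquet π (uAct u f) :=
    fun f hf => uxf_eq_choquet hA hπ hrep hxf hf
  constructor
  · -- P part
    intro P hPsub hPne hPconv hPcomp
    constructor
    · -- Pstar → chain condition
      intro hPstar n A hA0 hAn hAmem hchain
      rcases Nat.eq_zero_or_pos n with rfl | hn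
      · exfalso
        rw [hA0] at hAn
        exact Set.empty_ne_univ hAn
      by_contra hempty
      rw [Set.not_nonempty_iff_eq_empty] at hempty
      set vec : (Set S → ℝ) → (Fin n → ℝ) := fun p => fun i => p (A (i.val + 1)) with hvec
      have hKne : (vec '' P).Nonempty := hPne.image _
      have hKconv : Convex ℝ (vec '' P) := by
        rintro - ⟨p, hp, rfl⟩ - ⟨q, hq, rfl⟩ a b ha hb hab
        exact ⟨a • p + b • q, hPconv hp hq ha hb hab, rfl⟩
      have hKcomp : IsCompact (vec '' P) := by
        letI := weakStar 𝓐
        refine hPcomp.image_of_continuousOn ?_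
        rw [continuousOn_pi]
        intro i
        refine ((fint_continuous (indR_isSimple hA (hAmem _ i.isLt))).continuousOn).congr ?_
        intro p hp
        exact (fint_indR hA (hPsub hp) (hAmem _ i.isLt)).symm
      have hdis : ∀ x ∈ vec '' P, ¬ (∀ i, x i ≤ π (A (i.val + 1))) := by
        rintro - ⟨p, hp, rfl⟩ hle
        have hpmem : p ∈ P ∩ {p | p ∈ Δset 𝓐 ∧
            ∀ i, 1 ≤ i → i ≤ n → p (A i) ≤ π (A i)} := by
          refine ⟨hp, hPsub hp, ?_⟩
          intro i h1 h2
          have h3 := hle ⟨i - 1, by omega⟩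
          simpa [hvec, show i - 1 + 1 = i from by omega] using h3
        rw [hempty] at hpmem
        exact hpmem
      obtain ⟨μ, a, b, hμ, hsep1, hsep2, hsep3⟩ :=
        sep_down hKne hKconv hKcomp (fun i => π (A (i.val + 1))) hdis
      set ε := (b - a) / (n + 1) with hεd
      have hεpos : 0 < ε := div_pos (by linarith) (by positivity)
      set ν : ℕ → ℝ := fun k => if h : k - 1 < n then μ ⟨k - 1, h⟩ else 0 with hν
      set M := ∑ i : Fin n, (μ i + ε) with hM
      have hMnonneg : 0 ≤ M :=
        Finset.sum_nonneg fun i _ => by have := hμ i; linarith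
      set c := δ / (M + 1) with hc
      have hcpos : 0 < c := div_pos hδpos (by linarith)
      set lam : ℕ → ℝ := fun k => c * (ν k + ε) with hlam
      have hlamval : ∀ i : Fin n, lam (i.val + 1) = c * (μ i + ε) := by
        intro i
        simp only [hlam, hν, Nat.add_sub_cancel]
        rw [dif_pos i.isLt]
      have hlampos : ∀ k, 1 ≤ k → k ≤ n → 0 < lam k := by
        intro k h1 h2
        simp only [hlam, hν]
        rw [dif_pos (show k - 1 < n from by omega)]
        have := hμ ⟨k - 1, by omega⟩
        exact mul_pos hcpos (by linarith)
      have hsum_eq : ∀ q : Set S → ℝ, ∑ k ∈ Finset.Icc 1 n, lam k * q (A k)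
          = c * ((∑ i : Fin n, q (A (i.val + 1)) * μ i)
            + ε * ∑ i : Fin n, q (A (i.val + 1))) := by
        intro q
        rw [sum_Icc_fin n (fun k => lam k * q (A k))]
        have hterm : ∀ i ∈ (Finset.univ : Finset (Fin n)),
            lam (i.val + 1) * q (A (i.val + 1))
              = c * (q (A (i.val + 1)) * μ i) + c * ε * q (A (i.val + 1)) := by
          intro i _
          rw [hlamval i]
          ring
        rw [Finset.sum_congr rfl hterm, Finset.sum_add_distrib,
          ← Finset.mul_sum, ← Finset.mul_sum]
        ring
      have hlamsum : ∑ k ∈ Finset.Icc 1 n, lam k = c * M := by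
        rw [sum_Icc_fin n lam, hM, Finset.mul_sum]
        exact Finset.sum_congr rfl fun i _ => hlamval i
      have hsumlt : ∑ k ∈ Finset.Icc 1 n, lam k < δ := by
        rw [hlamsum, hc, div_mul_eq_mul_div, div_lt_iff₀ (by linarith)]
        nlinarith
      obtain ⟨f, hfActs, hfint, hchoq⟩ :=
        chain_act hA hX hball hn hA0 hAn hAmem hchain hlampos hsumlt
      have hchoqval : choquet π (uAct u f)
          = c * ((∑ i : Fin n, π (A (i.val + 1)) * μ i)
            + ε * ∑ i : Fin n, π (A (i.val + 1))) := by
        rw [hchoq π hπ.1 hπ.2.1, hsum_eq]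
      have hπsum_le : ∑ i : Fin n, π (A (i.val + 1)) ≤ (n : ℝ) := by
        calc ∑ i : Fin n, π (A (i.val + 1)) ≤ ∑ _i : Fin n, (1 : ℝ) :=
          Finset.sum_le_sum fun i _ => capacity_le_one hA hπ (hAmem _ i.isLt)
        _ = n := by simp
      have hεn : ε * n < b - a := by
        rw [hεd, div_mul_eq_mul_div, div_lt_iff₀ (by positivity)]
        nlinarith
      have hchoqlt : choquet π (uAct u f) < c * b := by
        rw [hchoqval]
        refine mul_lt_mul_of_pos_left ?_ hcpos
        have h5 : ε * ∑ i : Fin n, π (A (i.val + 1)) ≤ ε * n :=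
          mul_le_mul_of_nonneg_left hπsum_le (le_of_lt hεpos)
        linarith
      have hfint_ge : ∀ p ∈ P, c * b ≤ fint p (uAct u f) := by
        intro p hp
        rw [hfint p (hPsub hp), hsum_eq]
        have h3 := hsep3 (vec p) ⟨p, hp, rfl⟩
        have h3' : b < ∑ i : Fin n, p (A (i.val + 1)) * μ i := by
          simpa [hvec] using h3
        have hnn : 0 ≤ ∑ i : Fin n, p (A (i.val + 1)) :=
          Finset.sum_nonneg fun i _ => (hPsub hp).2.1 _ (hAmem _ i.isLt)
        refine mul_le_mul_of_nonneg_left ?_ (le_of_lt hcpos)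
        nlinarith [mul_nonneg (le_of_lt hεpos) hnn]
      have hmin := hPstar.2.2.2.2 f hfActs
      have hlow : ((c * b : ℝ) : EReal) ≤ minPVal P (uAct u f) :=
        le_iInf₂ fun p hp => EReal.coe_le_coe_iff.2 (hfint_ge p hp)
      have h2 := le_trans hlow hmin
      rw [show u (xf f) = choquet π (uAct u f) from huxf f hfActs] at h2
      have hreal := EReal.coe_le_coe_iff.1 h2
      linarith
    · -- chain condition → Pstar
      intro hcond
      refine ⟨hPsub, hPne, hPconv, hPcomp, ?_⟩
      intro f hf
      obtain ⟨m, t, B, hm, hstep, hB0, hBm, hBmem, hBmono, hBstrict, hBpre⟩ :=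
        act_chain hA hf
      obtain ⟨p, hpP, hpΔ, hple⟩ := hcond m B hB0 hBm hBmem hBstrict
      have hfle : fint p (uAct u f) ≤ choquet π (uAct u f) := by
        rw [fint_chain hA hpΔ hm hstep hB0 hBm hBmem hBmono hBpre,
          choquet_chain hπ.1 hπ.2.1 hm hstep hB0 hBm hBmono hBpre]
        have hterm : ∀ i ∈ Finset.Ico 1 m,
            (t i - t (i + 1)) * p (B i) ≤ (t i - t (i + 1)) * π (B i) := by
          intro i hi
          rw [Finset.mem_Ico] at hi
          refine mul_le_mul_of_nonneg_left (hple i hi.1 (by omega)) ?_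
          have := hstep i hi.1 hi.2
          linarith
        linarith [Finset.sum_le_sum hterm]
      rw [show u (xf f) = choquet π (uAct u f) from huxf f hf]
      calc minPVal P (uAct u f) ≤ ((fint p (uAct u f) : ℝ) : EReal) := iInf₂_le p hpP
      _ ≤ _ := EReal.coe_le_coe_iff.2 hfle
  · -- Q part
    intro Q hQsub hQne hQconv hQcomp
    constructor
    · intro hQstar n A hA0 hAn hAmem hchain
      rcases Nat.eq_zero_or_pos n with rfl | hn
      · exfalso
        rw [hA0] at hAn
        exact Set.empty_ne_univ hAn
      by_contra hempty
      rw [Set.not_nonempty_iff_eq_empty] at hempty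
      set vec : (Set S → ℝ) → (Fin n → ℝ) := fun p => fun i => p (A (i.val + 1)) with hvec
      have hKne : (vec '' Q).Nonempty := hQne.image _
      have hKconv : Convex ℝ (vec '' Q) := by
        rintro - ⟨p, hp, rfl⟩ - ⟨q, hq, rfl⟩ a b ha hb hab
        exact ⟨a • p + b • q, hQconv hp hq ha hb hab, rfl⟩
      have hKcomp : IsCompact (vec '' Q) := by
        letI := weakStar 𝓐
        refine hQcomp.image_of_continuousOn ?_
        rw [continuousOn_pi]
        intro i
        refine ((fint_continuous (indR_isSimple hA (hAmem _ i.isLt))).continuousOn).congr ?_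
        intro p hp
        exact (fint_indR hA (hQsub hp) (hAmem _ i.isLt)).symm
      have hdis : ∀ x ∈ vec '' Q, ¬ (∀ i, π (A (i.val + 1)) ≤ x i) := by
        rintro - ⟨q, hq, rfl⟩ hle
        have hqmem : q ∈ Q ∩ {q | q ∈ Δset 𝓐 ∧
            ∀ i, 1 ≤ i → i ≤ n → π (A i) ≤ q (A i)} := by
          refine ⟨hq, hQsub hq, ?_⟩
          intro i h1 h2
          have h3 := hle ⟨i - 1, by omega⟩
          simpa [hvec, show i - 1 + 1 = i from by omega] using h3
        rw [hempty] at hqmem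
        exact hqmem
      obtain ⟨μ, a, b, hμ, hsep1, hsep2, hsep3⟩ :=
        sep_up hKne hKconv hKcomp (fun i => π (A (i.val + 1))) hdis
      set ε := (b - a) / (n + 1) with hεd
      have hεpos : 0 < ε := div_pos (by linarith) (by positivity)
      set ν : ℕ → ℝ := fun k => if h : k - 1 < n then μ ⟨k - 1, h⟩ else 0 with hν
      set M := ∑ i : Fin n, (μ i + ε) with hM
      have hMnonneg : 0 ≤ M :=
        Finset.sum_nonneg fun i _ => by have := hμ i; linarith
      set c := δ / (M + 1) with hc
      have hcpos : 0 < c := div_pos hδpos (by linarith)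
      set lam : ℕ → ℝ := fun k => c * (ν k + ε) with hlam
      have hlamval : ∀ i : Fin n, lam (i.val + 1) = c * (μ i + ε) := by
        intro i
        simp only [hlam, hν, Nat.add_sub_cancel]
        rw [dif_pos i.isLt]
      have hlampos : ∀ k, 1 ≤ k → k ≤ n → 0 < lam k := by
        intro k h1 h2
        simp only [hlam, hν]
        rw [dif_pos (show k - 1 < n from by omega)]
        have := hμ ⟨k - 1, by omega⟩
        exact mul_pos hcpos (by linarith)
      have hsum_eq : ∀ q : Set S → ℝ, ∑ k ∈ Finset.Icc 1 n, lam k * q (A k)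
          = c * ((∑ i : Fin n, q (A (i.val + 1)) * μ i)
            + ε * ∑ i : Fin n, q (A (i.val + 1))) := by
        intro q
        rw [sum_Icc_fin n (fun k => lam k * q (A k))]
        have hterm : ∀ i ∈ (Finset.univ : Finset (Fin n)),
            lam (i.val + 1) * q (A (i.val + 1))
              = c * (q (A (i.val + 1)) * μ i) + c * ε * q (A (i.val + 1)) := by
          intro i _
          rw [hlamval i]
          ring
        rw [Finset.sum_congr rfl hterm, Finset.sum_add_distrib,
          ← Finset.mul_sum, ← Finset.mul_sum]
        ring
      have hlamsum : ∑ k ∈ Finset.Icc 1 n, lam k = c * M := by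
        rw [sum_Icc_fin n lam, hM, Finset.mul_sum]
        exact Finset.sum_congr rfl fun i _ => hlamval i
      have hsumlt : ∑ k ∈ Finset.Icc 1 n, lam k < δ := by
        rw [hlamsum, hc, div_mul_eq_mul_div, div_lt_iff₀ (by linarith)]
        nlinarith
      obtain ⟨f, hfActs, hfint, hchoq⟩ :=
        chain_act hA hX hball hn hA0 hAn hAmem hchain hlampos hsumlt
      have hεn : ε * n < b - a := by
        rw [hεd, div_mul_eq_mul_div, div_lt_iff₀ (by positivity)]
        nlinarith
      have hchoqgt : c * b < choquet π (uAct u f) := by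
        rw [hchoq π hπ.1 hπ.2.1, hsum_eq]
        have hπnn : 0 ≤ ∑ i : Fin n, π (A (i.val + 1)) :=
          Finset.sum_nonneg fun i _ => capacity_nonneg hA hπ (hAmem _ i.isLt)
        refine mul_lt_mul_of_pos_left ?_ hcpos
        nlinarith [mul_nonneg (le_of_lt hεpos) hπnn]
      have hfint_le : ∀ q ∈ Q, fint q (uAct u f) ≤ c * b := by
        intro q hq
        rw [hfint q (hQsub hq), hsum_eq]
        have h3 := hsep1 (vec q) ⟨q, hq, rfl⟩
        have h3' : ∑ i : Fin n, q (A (i.val + 1)) * μ i < a := by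
          simpa [hvec] using h3
        have hub : ∑ i : Fin n, q (A (i.val + 1)) ≤ (n : ℝ) := by
          calc ∑ i : Fin n, q (A (i.val + 1)) ≤ ∑ _i : Fin n, (1 : ℝ) :=
            Finset.sum_le_sum fun i _ => Δset.le_one hA (hQsub hq) (hAmem _ i.isLt)
          _ = n := by simp
        refine mul_le_mul_of_nonneg_left ?_ (le_of_lt hcpos)
        have h5 : ε * ∑ i : Fin n, q (A (i.val + 1)) ≤ ε * n :=
          mul_le_mul_of_nonneg_left hub (le_of_lt hεpos)
        linarith
      have hmax := hQstar.2.2.2.2 f hfActs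
      have hupb : maxQVal Q (uAct u f) ≤ ((c * b : ℝ) : EReal) :=
        iSup₂_le fun q hq => EReal.coe_le_coe_iff.2 (hfint_le q hq)
      have h2 := le_trans hmax hupb
      rw [show u (xf f) = choquet π (uAct u f) from huxf f hfActs] at h2
      have hreal := EReal.coe_le_coe_iff.1 h2
      linarith
    · intro hcond
      refine ⟨hQsub, hQne, hQconv, hQcomp, ?_⟩
      intro f hf
      obtain ⟨m, t, B, hm, hstep, hB0, hBm, hBmem, hBmono, hBstrict, hBpre⟩ :=
        act_chain hA hf
      obtain ⟨q, hqQ, hqΔ, hqge⟩ := hcond m B hB0 hBm hBmem hBstrict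
      have hfge : choquet π (uAct u f) ≤ fint q (uAct u f) := by
        rw [fint_chain hA hqΔ hm hstep hB0 hBm hBmem hBmono hBpre,
          choquet_chain hπ.1 hπ.2.1 hm hstep hB0 hBm hBmono hBpre]
        have hterm : ∀ i ∈ Finset.Ico 1 m,
            (t i - t (i + 1)) * π (B i) ≤ (t i - t (i + 1)) * q (B i) := by
          intro i hi
          rw [Finset.mem_Ico] at hi
          refine mul_le_mul_of_nonneg_left (hqge i hi.1 (by omega)) ?_
          have := hstep i hi.1 hi.2
          linarith
        linarith [Finset.sum_le_sum hterm]
      rw [show u (xf f) = choquet π (uAct u f) from huxf f hf]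
      calc ((choquet π (uAct u f) : ℝ) : EReal)
          ≤ ((fint q (uAct u f) : ℝ) : EReal) := EReal.coe_le_coe_iff.2 hfge
      _ ≤ maxQVal Q (uAct u f) := by
          unfold maxQVal
          exact le_iSup₂ (f := fun q (_ : q ∈ Q) => ((fint q (uAct u f) : ℝ) : EReal)) q hqQ

end Paper
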